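/- Let A be a positive conjunctive TABG with flat theory E, let r be a run of A, and let r' be the global pumping r[r|_{I(p̄1)}]_{p̄1}…[r|_{I(p̄n)}]_{p̄n} on r with indexes 1 ≤ j < i ≤ height(r) and pump-injection I. Let p1, p2 be positions of r such that each of them is a prefix of some position in H_i ∪ Ȟ_i ∪ H̊_i. Then p1 and p2 are positions of r', and term(r|_{p1}) =_E term(r|_{p2}) holds iff term(r'|_{p1}) =_E term(r'|_{p2}) holds. -/

import Mathlib

set_option maxHeartbeats 1000000

namespace TreeAut

/-! ### Ranked terms -/

/-- Ranked terms over a symbol type `F` (arities are imposed by well-formedness). -/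
inductive RTerm (F : Type) : Type
  | node : F → List (RTerm F) → RTerm F

namespace RTerm

def rootLabel {F : Type} : RTerm F → F
  | .node f _ => f

/-- `SubAt t p s` : the subterm of `t` at position `p` is `s`. -/
inductive SubAt {F : Type} : RTerm F → List ℕ → RTerm F → Prop
  | refl (t : RTerm F) : SubAt t [] t
  | step {f : F} {ts : List (RTerm F)} {i : ℕ} {u s : RTerm F} {p : List ℕ} :
      ts[i]? = some u → SubAt u p s → SubAt (RTerm.node f ts) (i :: p) s

/-- `p` is a position of `t`. -/
def IsPos {F : Type} (t : RTerm F) (p : List ℕ) : Prop := ∃ s, SubAt t p s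

/-- `ReplAt t p s t'` : `t'` is the result of replacing in `t` the subterm at `p` by `s`. -/
inductive ReplAt {F : Type} : RTerm F → List ℕ → RTerm F → RTerm F → Prop
  | here (t s : RTerm F) : ReplAt t [] s s
  | step {f : F} {ts : List (RTerm F)} {i : ℕ} {u u' s : RTerm F} {p : List ℕ} :
      ts[i]? = some u → ReplAt u p s u' →
      ReplAt (RTerm.node f ts) (i :: p) s (RTerm.node f (ts.set i u'))

/-- Height of a term: the maximal length of a position. -/
def height {F : Type} : RTerm F → ℕ
  | .node _ [] => 0
  | .node f (t :: ts) => max (height t + 1) (height (RTerm.node f ts))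

/-- Well-formedness of a term with respect to an arity function. -/
inductive WF {F : Type} (ar : F → ℕ) : RTerm F → Prop
  | node {f : F} {ts : List (RTerm F)} :
      ts.length = ar f → (∀ u ∈ ts, WF ar u) → WF ar (RTerm.node f ts)

/-- A constant, i.e. a term reduced to a symbol (of arity 0). -/
def IsConst {F : Type} (t : RTerm F) : Prop := ∃ c : F, t = RTerm.node c []

/-- Relabeling of a term. -/
def map {F G : Type} (g : F → G) : RTerm F → RTerm G
  | .node f ts => RTerm.node (g f) (ts.attach.map (fun u => map g u.1))
decreasing_by
  simp only [RTerm.node.sizeOf_spec]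
  have := List.sizeOf_lt_of_mem u.2
  omega

end RTerm

/-! ### Patterns (terms with variables) and flat equational theories -/

/-- Terms with variables (variables are natural numbers). -/
inductive Pat (F : Type) : Type
  | var : ℕ → Pat F
  | node : F → List (Pat F) → Pat F

namespace Pat

def subst {F : Type} (σ : ℕ → RTerm F) : Pat F → RTerm F
  | .var v => σ v
  | .node f ps => RTerm.node f (ps.attach.map (fun p => subst σ p.1))
decreasing_by
  simp only [Pat.node.sizeOf_spec]
  have := List.sizeOf_lt_of_mem p.2
  omega

def height {F : Type} : Pat F → ℕ
  | .var _ => 0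
  | .node _ [] => 0
  | .node f (p :: ps) => max (height p + 1) (height (Pat.node f ps))

inductive HasVar {F : Type} (v : ℕ) : Pat F → Prop
  | var : HasVar v (Pat.var v)
  | node {f : F} {ps : List (Pat F)} {p : Pat F} :
      p ∈ ps → HasVar v p → HasVar v (Pat.node f ps)

inductive WF {F : Type} (ar : F → ℕ) : Pat F → Prop
  | var (v : ℕ) : WF ar (Pat.var v)
  | node {f : F} {ps : List (Pat F)} :
      ps.length = ar f → (∀ p ∈ ps, WF ar p) → WF ar (Pat.node f ps)

end Pat

/-- A flat equation: both sides well-formed, of the same height which is at most 1,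
and with the same variables. -/
def IsFlatEq {F : Type} (ar : F → ℕ) (e : Pat F × Pat F) : Prop :=
  e.1.WF ar ∧ e.2.WF ar ∧ e.1.height = e.2.height ∧ e.1.height ≤ 1 ∧
  (∀ v : ℕ, Pat.HasVar v e.1 ↔ Pat.HasVar v e.2)

/-- One rewrite step using an equation of `E` (in either direction) at some position. -/
def Rew {F : Type} (E : List (Pat F × Pat F)) (s t : RTerm F) : Prop :=
  ∃ l r : Pat F, ((l, r) ∈ E ∨ (r, l) ∈ E) ∧
    ∃ (σ : ℕ → RTerm F) (p : List ℕ),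
      RTerm.SubAt s p (l.subst σ) ∧ RTerm.ReplAt s p (r.subst σ) t

/-- Equivalence modulo the set of equations `E`. -/
def EqE {F : Type} (E : List (Pat F × Pat F)) : RTerm F → RTerm F → Prop :=
  Relation.ReflTransGen (Rew E)

/-! ### Global constraints -/

/-- Transition rule of a tree automaton with constraints between brothers:
`sym(args) → res` with brother equalities `bcEq` and disequalities `bcNeq`
(1-based indices of children). -/
structure Rule (F Q : Type) where
  sym : F
  args : List Q
  bcEq : List (ℕ × ℕ)
  bcNeq : List (ℕ × ℕ)
  res : Q

/-- Atomic global constraints: `q ≈ q'`, `q ≉ q'`, and linear inequalities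
`Σ c·|q| ≥ a` (type `|.|`) and `Σ c·‖q‖ ≥ a` (type `‖.‖`). -/
inductive GAtom (Q : Type) : Type
  | eq : Q → Q → GAtom Q
  | neq : Q → Q → GAtom Q
  | cnt : List (ℤ × Q) → ℤ → GAtom Q
  | cls : List (ℤ × Q) → ℤ → GAtom Q

/-- Boolean combinations of atomic global constraints. -/
inductive GC (Q : Type) : Type
  | tt : GC Q
  | ff : GC Q
  | atom : GAtom Q → GC Q
  | and : GC Q → GC Q → GC Q
  | or : GC Q → GC Q → GC Q
  | not : GC Q → GC Q

/-- The set of `=E`-equivalence classes of members of a set of terms. -/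
def classesOf {F : Type} (E : List (Pat F × Pat F)) (S : Set (RTerm F)) :
    Set (Set (RTerm F)) :=
  {C | ∃ t ∈ S, C = {u | EqE E t u}}

section Sat

variable {β F Q : Type}

/-- Positions of a (run) tree where the node has state `q`
(`st` extracts the state of a node label). -/
def stPos (st : β → Q) (r : RTerm β) (q : Q) : Set (List ℕ) :=
  {p | ∃ s, RTerm.SubAt r p s ∧ st s.rootLabel = q}

/-- `⟦|q|⟧` : the number of positions with state `q`. -/
noncomputable def stCount (st : β → Q) (r : RTerm β) (q : Q) : ℕ :=
  (stPos st r q).ncard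

/-- Terms occurring below positions with state `q`. -/
def stTerms (st : β → Q) (sy : β → F) (r : RTerm β) (q : Q) : Set (RTerm F) :=
  {t | ∃ p s, RTerm.SubAt r p s ∧ st s.rootLabel = q ∧ s.map sy = t}

/-- `⟦‖q‖⟧` : the number of `=E`-classes of terms at positions with state `q`. -/
noncomputable def clsCount (E : List (Pat F × Pat F)) (st : β → Q) (sy : β → F)
    (r : RTerm β) (q : Q) : ℕ :=
  (classesOf E (stTerms st sy r q)).ncard

/-- Satisfaction of a global atomic constraint by a run tree. -/
def satAtom (E : List (Pat F × Pat F)) (st : β → Q) (sy : β → F) (r : RTerm β) :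
    GAtom Q → Prop
  | .eq q q' => ∀ p p' s s', p ≠ p' → RTerm.SubAt r p s → RTerm.SubAt r p' s' →
      st s.rootLabel = q → st s'.rootLabel = q' → EqE E (s.map sy) (s'.map sy)
  | .neq q q' => ∀ p p' s s', p ≠ p' → RTerm.SubAt r p s → RTerm.SubAt r p' s' →
      st s.rootLabel = q → st s'.rootLabel = q' → ¬ EqE E (s.map sy) (s'.map sy)
  | .cnt l a => a ≤ (l.map (fun cq => cq.1 * (stCount st r cq.2 : ℤ))).sum
  | .cls l a => a ≤ (l.map (fun cq => cq.1 * (clsCount E st sy r cq.2 : ℤ))).sum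

/-- Satisfaction of a global constraint by a run tree. -/
def satGC (E : List (Pat F × Pat F)) (st : β → Q) (sy : β → F) (r : RTerm β) :
    GC Q → Prop
  | .tt => True
  | .ff => False
  | .atom a => satAtom E st sy r a
  | .and c d => satGC E st sy r c ∧ satGC E st sy r d
  | .or c d => satGC E st sy r c ∨ satGC E st sy r d
  | .not c => ¬ satGC E st sy r c

end Sat

/-! ### Tree automata with global and brother constraints modulo a flat theory -/

/-- A run is represented as a tree labeled by the rules applied at each position. -/
abbrev Run (F Q : Type) := RTerm (Rule F Q)

def Run.state {F Q : Type} (r : Run F Q) : Q := (RTerm.rootLabel r).res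
def Run.term {F Q : Type} (r : Run F Q) : RTerm F := r.map Rule.sym

/-- `r` is a structurally correct run using rules of `Δ`, whose local brother
constraints are satisfied modulo `E`. -/
inductive IsRun {F Q : Type} (Δ : List (Rule F Q)) (E : List (Pat F × Pat F)) :
    Run F Q → Prop
  | node {ρ : Rule F Q} {rs : List (Run F Q)} :
      ρ ∈ Δ →
      ρ.args = rs.map Run.state →
      (∀ r ∈ rs, IsRun Δ E r) →
      (∀ i j ri rj, (i, j) ∈ ρ.bcEq → rs[i - 1]? = some ri →
        rs[j - 1]? = some rj → EqE E ri.term rj.term) →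
      (∀ i j ri rj, (i, j) ∈ ρ.bcNeq → rs[i - 1]? = some ri →
        rs[j - 1]? = some rj → ¬ EqE E ri.term rj.term) →
      IsRun Δ E (RTerm.node ρ rs)

/-- Tree automaton with brother constraints and global constraints modulo a flat theory. -/
structure TABG (F Q : Type) where
  arity : F → ℕ
  stQ : Finset Q
  rules : List (Rule F Q)
  final : List Q
  eqs : List (Pat F × Pat F)
  gc : GC Q

def TABG.IsAccRun {F Q : Type} (A : TABG F Q) (r : Run F Q) : Prop :=
  IsRun A.rules A.eqs r ∧ satGC A.eqs Rule.res Rule.sym r A.gc ∧ r.state ∈ A.final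

def TABG.Lang {F Q : Type} (A : TABG F Q) : Set (RTerm F) :=
  {t | ∃ r : Run F Q, A.IsAccRun r ∧ r.term = t}

def Rule.WFr {F Q : Type} (ar : F → ℕ) (S : Finset Q) (ρ : Rule F Q) : Prop :=
  ρ.args.length = ar ρ.sym ∧ ρ.res ∈ S ∧ (∀ q ∈ ρ.args, q ∈ S) ∧
  (∀ ij ∈ ρ.bcEq, 1 ≤ ij.1 ∧ ij.1 ≤ ρ.args.length ∧ 1 ≤ ij.2 ∧ ij.2 ≤ ρ.args.length) ∧
  (∀ ij ∈ ρ.bcNeq, 1 ≤ ij.1 ∧ ij.1 ≤ ρ.args.length ∧ 1 ≤ ij.2 ∧ ij.2 ≤ ρ.args.length)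

/-- Well-formedness of a TABG: the equational theory is flat, the rules respect
the arities and the state set, and final states belong to the state set. -/
def TABG.WF {F Q : Type} (A : TABG F Q) : Prop :=
  (∀ e ∈ A.eqs, IsFlatEq A.arity e) ∧
  (∀ ρ ∈ A.rules, ρ.WFr A.arity A.stQ) ∧
  (∀ q ∈ A.final, q ∈ A.stQ)

/-! ### Classes of constraints -/

def GAtom.IsEqNeq {Q : Type} : GAtom Q → Prop
  | .eq _ _ => True
  | .neq _ _ => True
  | .cnt _ _ => False
  | .cls _ _ => False

/-- All coefficients and the constant have the same sign. -/
def sameSign (l : List ℤ) (a : ℤ) : Prop :=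
  ((∀ c ∈ l, 0 ≤ c) ∧ 0 ≤ a) ∨ ((∀ c ∈ l, c ≤ 0) ∧ a ≤ 0)

/-- eq/neq atoms and *natural* linear inequalities. -/
def GAtom.IsNat {Q : Type} : GAtom Q → Prop
  | .eq _ _ => True
  | .neq _ _ => True
  | .cnt l a => sameSign (l.map Prod.fst) a
  | .cls l a => sameSign (l.map Prod.fst) a

/-- eq/neq atoms and natural linear inequalities over the `|q|` only. -/
def GAtom.IsNatCnt {Q : Type} : GAtom Q → Prop
  | .eq _ _ => True
  | .neq _ _ => True
  | .cnt l a => sameSign (l.map Prod.fst) a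
  | .cls _ _ => False

def GC.AtomsAre {Q : Type} (P : GAtom Q → Prop) : GC Q → Prop
  | .tt => True
  | .ff => True
  | .atom a => P a
  | .and c d => GC.AtomsAre P c ∧ GC.AtomsAre P d
  | .or c d => GC.AtomsAre P c ∧ GC.AtomsAre P d
  | .not c => GC.AtomsAre P c

/-- Positive conjunctive constraint: a conjunction of atoms. -/
def GC.IsConjAtoms {Q : Type} : GC Q → Prop
  | .tt => True
  | .ff => False
  | .atom _ => True
  | .and c d => GC.IsConjAtoms c ∧ GC.IsConjAtoms d
  | .or _ _ => False
  | .not _ => False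

/-- A literal: an atom (with natural arithmetic atoms) or the negation of an
eq/neq atom. -/
def GC.IsLit {Q : Type} : GC Q → Prop
  | .atom a => GAtom.IsNat a
  | .not (.atom (.eq _ _)) => True
  | .not (.atom (.neq _ _)) => True
  | _ => False

def GC.IsConjLit {Q : Type} : GC Q → Prop
  | .and c d => GC.IsConjLit c ∧ GC.IsConjLit d
  | c => GC.IsLit c

def GC.IsDNF {Q : Type} : GC Q → Prop
  | .or c d => GC.IsDNF c ∧ GC.IsDNF d
  | c => GC.IsConjLit c

/-- Normalized constraint: `true`, `false`, or a disjunction of conjunctions of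
literals in which all arithmetic literals are positive. -/
def GC.Normalized {Q : Type} (c : GC Q) : Prop :=
  c = GC.tt ∨ c = GC.ff ∨ GC.IsDNF c

/-- No reflexive disequality constraints (the TAGED restriction). -/
def GC.NoReflNeq {Q : Type} : GC Q → Prop :=
  GC.AtomsAre (fun a => match a with
    | .neq q q' => q ≠ q'
    | _ => True)

def conjList {Q : Type} : List (GC Q) → GC Q
  | [] => GC.tt
  | [c] => c
  | c :: cs => GC.and c (conjList cs)

def disjList {Q : Type} : List (GC Q) → GC Q
  | [] => GC.ff
  | [c] => c
  | c :: cs => GC.or c (disjList cs)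

/-- No local constraints between brothers. -/
def TABG.NoBrother {F Q : Type} (A : TABG F Q) : Prop :=
  ∀ ρ ∈ A.rules, ρ.bcEq = [] ∧ ρ.bcNeq = []

/-- A TAG: empty equational theory and no brother constraints. -/
def TABG.IsTAG {F Q : Type} (A : TABG F Q) : Prop := A.eqs = [] ∧ A.NoBrother

/-- A plain tree automaton: a TAG with trivial global constraint. -/
def TABG.IsTA {F Q : Type} (A : TABG F Q) : Prop := A.IsTAG ∧ A.gc = GC.tt

/-! ### Synonym states -/

section Syn

variable {F Q : Type} [DecidableEq Q]

/-- Possible replacements of a state occurrence: `q̄` may stay or become `q̂`. -/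
def replS (qb qh q : Q) : List Q := if q = qb then [qb, qh] else [q]

/-- Replacement of every occurrence of `|q̄|` (resp. `‖q̄‖`) by `|q̄| + |q̂|`
(resp. `‖q̄‖ + ‖q̂‖`) in a linear expression. -/
def linRepl (qb qh : Q) (l : List (ℤ × Q)) : List (ℤ × Q) :=
  l.flatMap (fun cq => (replS qb qh cq.2).map (fun q' => (cq.1, q')))

/-- Literal transformation on positive atoms. -/
def synAtom (qb qh : Q) : GAtom Q → GC Q
  | .eq q1 q2 => conjList ((replS qb qh q1).flatMap (fun a =>
      (replS qb qh q2).map (fun b => GC.atom (GAtom.eq a b))))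
  | .neq q1 q2 => conjList ((replS qb qh q1).flatMap (fun a =>
      (replS qb qh q2).map (fun b => GC.atom (GAtom.neq a b))))
  | .cnt l a => GC.atom (GAtom.cnt (linRepl qb qh l) a)
  | .cls l a => GC.atom (GAtom.cls (linRepl qb qh l) a)

/-- The literal transformation `Ĉ` of (a normalized) constraint, for `q̄ ↝ q̂`. -/
def GC.synTrans (qb qh : Q) : GC Q → GC Q
  | .tt => .tt
  | .ff => .ff
  | .atom a => synAtom qb qh a
  | .not (.atom (.eq q1 q2)) => disjList ((replS qb qh q1).flatMap (fun a =>
      (replS qb qh q2).map (fun b => GC.not (GC.atom (GAtom.eq a b)))))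
  | .not (.atom (.neq q1 q2)) => disjList ((replS qb qh q1).flatMap (fun a =>
      (replS qb qh q2).map (fun b => GC.not (GC.atom (GAtom.neq a b)))))
  | .not c => GC.not (GC.synTrans qb qh c)
  | .and c d => GC.and (GC.synTrans qb qh c) (GC.synTrans qb qh d)
  | .or c d => GC.or (GC.synTrans qb qh c) (GC.synTrans qb qh d)

/-- All rules obtained from `ρ` by all possible replacements of occurrences of
`q̄` by `q̂`. -/
def Rule.synVars (qb qh : Q) (ρ : Rule F Q) : List (Rule F Q) :=
  (ρ.args.mapM (replS qb qh)).flatMap (fun args' =>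
    (replS qb qh ρ.res).map (fun res' =>
      { sym := ρ.sym, args := args', bcEq := ρ.bcEq, bcNeq := ρ.bcNeq, res := res' }))

/-- `F_{q̄↝q̂}` on the list of final states. -/
def finSyn (qb qh : Q) (l : List Q) : List Q := if qb ∈ l then qh :: l else l

/-- The constraint `‖q‖ = k`. -/
def clsEqC (q : Q) (k : ℤ) : GC Q :=
  GC.and (GC.atom (GAtom.cls [(1, q)] k)) (GC.atom (GAtom.cls [(-1, q)] (-k)))

/-- The automaton `A_{q̄↝q̂}`. -/
def TABG.synonym (A : TABG F Q) (qb qh : Q) : TABG F Q :=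
  { arity := A.arity
    stQ := insert qh A.stQ
    rules := A.rules.flatMap (Rule.synVars qb qh)
    final := finSyn qb qh A.final
    eqs := A.eqs
    gc := GC.and
      (GC.or (GC.and (clsEqC qb 0) (clsEqC qh 0))
             (GC.and (clsEqC qh 1) (GC.atom (GAtom.neq qb qh))))
      (GC.synTrans qb qh A.gc) }

end Syn

/-! ### Removal of the counting constraints `|q|` : the automaton `A_¬ℕ` -/

def GC.cntAtoms {Q : Type} : GC Q → List (List (ℤ × Q) × ℤ)
  | .atom (.cnt l a) => [(l, a)]
  | .and c d => GC.cntAtoms c ++ GC.cntAtoms d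
  | .or c d => GC.cntAtoms c ++ GC.cntAtoms d
  | .not c => GC.cntAtoms c
  | _ => []

def GC.eqAtoms {Q : Type} : GC Q → List (Q × Q)
  | .atom (.eq q q') => [(q, q')]
  | .and c d => GC.eqAtoms c ++ GC.eqAtoms d
  | .or c d => GC.eqAtoms c ++ GC.eqAtoms d
  | .not c => GC.eqAtoms c
  | _ => []

def GC.neqAtoms {Q : Type} : GC Q → List (Q × Q)
  | .atom (.neq q q') => [(q, q')]
  | .and c d => GC.neqAtoms c ++ GC.neqAtoms d
  | .or c d => GC.neqAtoms c ++ GC.neqAtoms d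
  | .not c => GC.neqAtoms c
  | _ => []

/-- `max_A` : one plus the maximal constant occurring in the counting literals. -/
def GC.maxConst {Q : Type} (c : GC Q) : ℕ :=
  1 + ((c.cntAtoms.map (fun la => la.2.natAbs)).foldr max 0)

/-- Truncated sum of two mappings `Q → {0,…,m}`. -/
def msumF {Q : Type} {m : ℕ} (M1 M2 : Q → Fin (m + 1)) : Q → Fin (m + 1) :=
  fun q => ⟨min ((M1 q : ℕ) + (M2 q : ℕ)) m, Nat.lt_succ_of_le (Nat.min_le_right _ _)⟩

/-- The mapping `M_q`. -/
def unitMap {Q : Type} [DecidableEq Q] (m : ℕ) (q : Q) : Q → Fin (m + 1) :=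
  fun q' => if q' = q then ⟨min 1 m, Nat.lt_succ_of_le (Nat.min_le_right _ _)⟩
            else ⟨0, Nat.succ_pos m⟩

/-- Value of a linear expression under a mapping. -/
def lvalF {Q : Type} {m : ℕ} (M : Q → Fin (m + 1)) (l : List (ℤ × Q)) : ℤ :=
  (l.map (fun cq => cq.1 * ((M cq.2 : ℕ) : ℤ))).sum

/-- All variants of a rule, decorated with occurrence-counting mappings. -/
noncomputable def Rule.notNVars {F Q : Type} [Fintype Q] [DecidableEq Q] (m : ℕ) (ρ : Rule F Q) :
    List (Rule F (Q × (Q → Fin (m + 1)))) :=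
  ((ρ.args.mapM (fun q =>
      ((Finset.univ : Finset (Q → Fin (m + 1))).toList).map (fun M => (q, M))))).map
    (fun args' =>
      { sym := ρ.sym, args := args', bcEq := ρ.bcEq, bcNeq := ρ.bcNeq,
        res := (ρ.res, (args'.map Prod.snd).foldr msumF (unitMap m ρ.res)) })

/-- The automaton `A_¬ℕ`. -/
noncomputable def TABG.notN {F Q : Type} [Fintype Q] [DecidableEq Q] (A : TABG F Q) :
    TABG F (Q × (Q → Fin (A.gc.maxConst + 1))) :=
  { arity := A.arity
    stQ := A.stQ ×ˢ (Finset.univ : Finset (Q → Fin (A.gc.maxConst + 1)))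
    rules := A.rules.flatMap (Rule.notNVars A.gc.maxConst)
    final := (A.final.flatMap (fun q =>
        ((Finset.univ : Finset (Q → Fin (A.gc.maxConst + 1))).toList).map
          (fun M => (q, M)))).filter
        (fun qM => decide (∀ la ∈ A.gc.cntAtoms, la.2 ≤ lvalF qM.2 la.1))
    eqs := A.eqs
    gc := GC.and
      (conjList ((A.gc.eqAtoms).flatMap (fun qq =>
        ((Finset.univ : Finset (Q → Fin (A.gc.maxConst + 1))).toList).flatMap (fun M1 =>
          ((Finset.univ : Finset (Q → Fin (A.gc.maxConst + 1))).toList).map (fun M2 =>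
            GC.atom (GAtom.eq (qq.1, M1) (qq.2, M2)))))))
      (conjList ((A.gc.neqAtoms).flatMap (fun qq =>
        ((Finset.univ : Finset (Q → Fin (A.gc.maxConst + 1))).toList).flatMap (fun M1 =>
          ((Finset.univ : Finset (Q → Fin (A.gc.maxConst + 1))).toList).map (fun M2 =>
            GC.atom (GAtom.neq (qq.1, M1) (qq.2, M2))))))) }

/-! ### Global pumpings -/

section Pump

variable {F Q : Type}

/-- `H_i` : positions of subruns of positive height equal to `i`. -/
def Hset (r : Run F Q) (i : ℕ) : Set (List ℕ) :=
  {p | ∃ s, RTerm.SubAt r p s ∧ 0 < RTerm.height s ∧ RTerm.height s = i}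

/-- `Ȟ_i` : positions `p.j` of subruns of positive height `< i` whose parent has
height `> i`. -/
def Hcheck (r : Run F Q) (i : ℕ) : Set (List ℕ) :=
  {p' | ∃ (p : List ℕ) (j : ℕ) (s s' : Run F Q), p' = p ++ [j] ∧
    RTerm.SubAt r p s ∧ RTerm.SubAt r p' s' ∧
    0 < RTerm.height s' ∧ RTerm.height s' < i ∧ i < RTerm.height s}

/-- `H̊_i` : positions `p.j` of subruns of height `0` (with `0 < i`) whose parent
has height `> i`. -/
def Hring (r : Run F Q) (i : ℕ) : Set (List ℕ) :=
  {p' | ∃ (p : List ℕ) (j : ℕ) (s s' : Run F Q), p' = p ++ [j] ∧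
    RTerm.SubAt r p s ∧ RTerm.SubAt r p' s' ∧
    RTerm.height s' = 0 ∧ 0 < i ∧ i < RTerm.height s}

def Dom (r : Run F Q) (i : ℕ) : Set (List ℕ) := Hset r i ∪ Hcheck r i ∪ Hring r i

/-- A pump-injection `I : (H_i ∪ Ȟ_i ∪ H̊_i) → (H_j ∪ Ȟ_j ∪ H̊_j)`. -/
structure PumpInj (E : List (Pat F × Pat F)) (r : Run F Q) (i j : ℕ)
    (I : List ℕ → List ℕ) : Prop where
  inj : Set.InjOn I (Dom r i)
  mapsH : Set.MapsTo I (Hset r i) (Hset r j)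
  mapsHc : Set.MapsTo I (Hcheck r i) (Hcheck r j)
  mapsHr : Set.MapsTo I (Hring r i) (Hring r j)
  idRing : ∀ p ∈ Hring r i, I p = p
  stPres : ∀ p ∈ Dom r i, ∀ s s', RTerm.SubAt r p s → RTerm.SubAt r (I p) s' →
    Run.state s = Run.state s'
  eqPres : ∀ p1 p2, p1 ∈ Dom r i → p2 ∈ Dom r i →
    ∀ s1 s2 s1' s2', RTerm.SubAt r p1 s1 → RTerm.SubAt r p2 s2 →
      RTerm.SubAt r (I p1) s1' → RTerm.SubAt r (I p2) s2' →
      (EqE E (Run.term s1) (Run.term s2) ↔ EqE E (Run.term s1') (Run.term s2'))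

/-- Simultaneous replacement at all positions of `D` (which are assumed to be
pairwise parallel): at a position of `D` the subtree is replaced by a tree
allowed by `ρ`, elsewhere the tree is kept. -/
inductive MultiRepl {β : Type} (D : Set (List ℕ)) (ρ : List ℕ → RTerm β → Prop) :
    List ℕ → RTerm β → RTerm β → Prop
  | here {p : List ℕ} {t t' : RTerm β} : p ∈ D → ρ p t' → MultiRepl D ρ p t t'
  | node {p : List ℕ} {f : β} {ts ts' : List (RTerm β)} :
      p ∉ D → ts.length = ts'.length →
      (∀ k u u', ts[k]? = some u → ts'[k]? = some u' →
        MultiRepl D ρ (p ++ [k]) u u') →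
      MultiRepl D ρ p (RTerm.node f ts) (RTerm.node f ts')

/-- `r'` is the global pumping on `r` with indexes `i,j` and injection `I`. -/
def IsGlobalPumpingWith (E : List (Pat F × Pat F)) (r : Run F Q) (i j : ℕ)
    (I : List ℕ → List ℕ) (r' : Run F Q) : Prop :=
  PumpInj E r i j I ∧
  MultiRepl (Dom r i) (fun p s => RTerm.SubAt r (I p) s) [] r r'

/-- The `=E`-classes of the subterms at positions of `P`. -/
def classesAt (E : List (Pat F × Pat F)) (r : Run F Q) (P : Set (List ℕ)) :
    Set (Set (RTerm F)) :=
  classesOf E {t | ∃ p ∈ P, ∃ s, RTerm.SubAt r p s ∧ Run.term s = t}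

/-- The tuple `r_{t,P}` of a class `C`, as a function on states. -/
noncomputable def tupleAt (r : Run F Q) (P : Set (List ℕ)) (C : Set (RTerm F))
    (q : Q) : ℕ :=
  {p | p ∈ P ∧ ∃ s, RTerm.SubAt r p s ∧ Run.state s = q ∧ Run.term s ∈ C}.ncard

/-- The multiset ordering `r_P ≤ r_{P'}` : an injection on classes which is
dominating on the associated tuples. -/
def MsetLE (E : List (Pat F × Pat F)) (r : Run F Q) (P P' : Set (List ℕ)) : Prop :=
  ∃ φ : Set (RTerm F) → Set (RTerm F),
    Set.InjOn φ (classesAt E r P) ∧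
    Set.MapsTo φ (classesAt E r P) (classesAt E r P') ∧
    ∀ C ∈ classesAt E r P, ∀ q, tupleAt r P C q ≤ tupleAt r P' (φ C) q

end Pump

/-! ### Multisets of tuples of naturals (for the well quasi-ordering) -/

def TupLE {n : ℕ} (x y : Fin n → ℕ) : Prop := ∀ k, x k ≤ y k

/-- Multiset ordering: an injection mapping each element to a dominating one. -/
def MLE {n : ℕ} (S T : Multiset (Fin n → ℕ)) : Prop :=
  ∃ T' : Multiset (Fin n → ℕ), T' ≤ T ∧ Multiset.Rel TupLE S T'

def msumT {n : ℕ} (S : Multiset (Fin n → ℕ)) : ℕ :=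
  (S.map (fun x => ∑ k, x k)).sum

/-! ### Hedge automata with global constraints, and currying -/

/-- A finite word automaton over the alphabet `Q` (auxiliary states are naturals). -/
structure WordAut (Q : Type) where
  stS : Finset ℕ
  init : ℕ
  final : List ℕ
  trans : List (ℕ × Q × ℕ)

inductive WAccepts {Q : Type} (W : WordAut Q) : ℕ → List Q → Prop
  | nil {s : ℕ} : s ∈ W.final → WAccepts W s []
  | cons {s : ℕ} {q : Q} {s' : ℕ} {w : List Q} :
      (s, q, s') ∈ W.trans → WAccepts W s' w → WAccepts W s (q :: w)

def WordAut.Lang {Q : Type} (W : WordAut Q) (w : List Q) : Prop := WAccepts W W.init w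

/-- Transition rule `a(L) → q` of a hedge automaton. -/
structure HRule (F Q : Type) where
  sym : F
  wa : WordAut Q
  res : Q

/-- Hedge automaton with global constraints, over unranked ordered terms. -/
structure HAG (F Q : Type) where
  stQ : Finset Q
  rules : List (HRule F Q)
  final : List Q
  gc : GC Q

abbrev HRun (F Q : Type) := RTerm (HRule F Q)

def HRun.state {F Q : Type} (r : HRun F Q) : Q := (RTerm.rootLabel r).res
def HRun.term {F Q : Type} (r : HRun F Q) : RTerm F := r.map HRule.sym

inductive IsHRun {F Q : Type} (Δ : List (HRule F Q)) : HRun F Q → Prop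
  | node {ρ : HRule F Q} {rs : List (HRun F Q)} :
      ρ ∈ Δ → ρ.wa.Lang (rs.map HRun.state) →
      (∀ r ∈ rs, IsHRun Δ r) → IsHRun Δ (RTerm.node ρ rs)

def HAG.Lang {F Q : Type} (A : HAG F Q) : Set (RTerm F) :=
  {t | ∃ r : HRun F Q, IsHRun A.rules r ∧
        satGC ([] : List (Pat F × Pat F)) HRule.res HRule.sym r A.gc ∧
        HRun.state r ∈ A.final ∧ HRun.term r = t}

/-- The ranked signature `Σ_@` : symbols of `Σ` become constants, `none` is the
binary symbol `@`. -/
def arAt {F : Type} : Option F → ℕ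
  | none => 2
  | some _ => 0

/-- The `curry` encoding of unranked terms into ranked terms over `Σ_@`. -/
inductive Curried {F : Type} : RTerm F → RTerm (Option F) → Prop
  | base {a : F} : Curried (RTerm.node a []) (RTerm.node (some a) [])
  | step {a : F} {ts : List (RTerm F)} {t : RTerm F} {u v : RTerm (Option F)} :
      Curried (RTerm.node a ts) u → Curried t v →
      Curried (RTerm.node a (ts ++ [t])) (RTerm.node none [u, v])

/-! ### Concrete signatures and languages -/

/-- The signature `{a:0, s:1, f:2}` (resp. `{a:0, g:1, f:2}`): symbol `0` has
arity 0, symbol `1` arity 1, symbol `2` arity 2. -/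
def ar3 : Fin 3 → ℕ := ![0, 1, 2]

/-- `iter1 n` is `s^n(a)` (resp. `g^n(a)`). -/
def iter1 : ℕ → RTerm (Fin 3)
  | 0 => RTerm.node 0 []
  | n + 1 => RTerm.node 1 [iter1 n]

/-- `chain [n1,…,nk] = f(s^{n1}(a), f(s^{n2}(a), …, f(s^{nk}(a), a)…))`. -/
def chain : List ℕ → RTerm (Fin 3)
  | [] => RTerm.node 0 []
  | n :: ns => RTerm.node 2 [iter1 n, chain ns]

/-- The language of chains with pairwise distinct exponents. -/
def LKey : Set (RTerm (Fin 3)) := {t | ∃ ns : List ℕ, ns.Nodup ∧ t = chain ns}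

/-- `bracket [n1,…,nk] = f(g^{n1}(a), f(…, f(g^{n_{k−1}}(a), g^{n_k}(a))…))`. -/
def bracket : List ℕ → RTerm (Fin 3)
  | [] => RTerm.node 0 []
  | [n] => iter1 n
  | n :: ns => RTerm.node 2 [iter1 n, bracket ns]

/-- Every entry has exactly one partner with the same value. -/
def ExactlyOnePartner (ns : List ℕ) : Prop :=
  ∀ i, i < ns.length → ∃! j, j < ns.length ∧ j ≠ i ∧ ns[i]? = ns[j]?

def LDup : Set (RTerm (Fin 3)) :=
  {t | ∃ ns : List ℕ, ns ≠ [] ∧ ExactlyOnePartner ns ∧ t = bracket ns}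

/-! ### Concrete, codable presentations of automata -/

abbrev RuleData := ℕ × List ℕ × List (ℕ × ℕ) × List (ℕ × ℕ) × ℕ
abbrev PatAtomData := ℕ ⊕ ℕ
abbrev FlatSideData := PatAtomData ⊕ (ℕ × List PatAtomData)
abbrev LinData := List (ℤ × ℕ) × ℤ
abbrev GAtomData := (ℕ × ℕ) ⊕ ((ℕ × ℕ) ⊕ (LinData ⊕ LinData))
abbrev GCNodeData := GAtomData ⊕ (ℕ × ℕ × ℕ)
abbrev TABGData :=
  List (ℕ × ℕ) × List RuleData × List ℕ × List (FlatSideData × FlatSideData) ×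
    List GCNodeData

def decodePatAtom : PatAtomData → Pat ℕ
  | Sum.inl v => Pat.var v
  | Sum.inr c => Pat.node c []

def decodeSide : FlatSideData → Pat ℕ
  | Sum.inl a => decodePatAtom a
  | Sum.inr (f, l) => Pat.node f (l.map decodePatAtom)

def decodeGAtom : GAtomData → GAtom ℕ
  | Sum.inl (q, q') => GAtom.eq q q'
  | Sum.inr (Sum.inl (q, q')) => GAtom.neq q q'
  | Sum.inr (Sum.inr (Sum.inl (l, a))) => GAtom.cnt l a
  | Sum.inr (Sum.inr (Sum.inr (l, a))) => GAtom.cls l a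

def decodeGC (nodes : List GCNodeData) : ℕ → ℕ → GC ℕ
  | 0, _ => GC.tt
  | fuel + 1, i =>
    match nodes[i]? with
    | some (Sum.inl a) => GC.atom (decodeGAtom a)
    | some (Sum.inr (op, l, rr)) =>
      if op = 0 then GC.tt
      else if op = 1 then GC.ff
      else if op = 2 then GC.and (decodeGC nodes fuel l) (decodeGC nodes fuel rr)
      else if op = 3 then GC.or (decodeGC nodes fuel l) (decodeGC nodes fuel rr)
      else GC.not (decodeGC nodes fuel l)
    | none => GC.tt

def decodeRule : RuleData → Rule ℕ ℕ
  | (f, args, be, bn, q) => ⟨f, args, be, bn, q⟩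

def decodeArity (sig : List (ℕ × ℕ)) : ℕ → ℕ :=
  fun f => (((sig.find? (fun p => p.1 == f)).map Prod.snd).getD 0)

def dataStates (rules : List RuleData) (final : List ℕ) : Finset ℕ :=
  (rules.flatMap (fun r => r.2.2.2.2 :: r.2.1)).toFinset ∪ final.toFinset

/-- Decoding of a full TABG with arbitrary Boolean global constraint. -/
def decodeTABG (d : TABGData) : TABG ℕ ℕ :=
  { arity := decodeArity d.1
    stQ := dataStates d.2.1 d.2.2.1
    rules := d.2.1.map decodeRule
    final := d.2.2.1
    eqs := d.2.2.2.1.map (fun e => (decodeSide e.1, decodeSide e.2))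
    gc := decodeGC d.2.2.2.2 (d.2.2.2.2).length 0 }

/-- Data for a `TAG^∧[≈]` : signature, rules (no brother constraints), final
states, and a conjunction of equational atoms `q ≈ q'`. -/
abbrev TAGCEData := List (ℕ × ℕ) × List (ℕ × List ℕ × ℕ) × List ℕ × List (ℕ × ℕ)

def decodeTAGCE (d : TAGCEData) : TABG ℕ ℕ :=
  { arity := decodeArity d.1
    stQ := (d.2.1.flatMap (fun r => r.2.2 :: r.2.1)).toFinset ∪ d.2.2.1.toFinset
    rules := d.2.1.map (fun r => ⟨r.1, r.2.1, [], [], r.2.2⟩)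
    final := d.2.2.1
    eqs := []
    gc := conjList (d.2.2.2.map (fun qq => GC.atom (GAtom.eq qq.1 qq.2))) }

/-- Data for a `TAG^∧[≈, |.|_ℤ]` : as above plus a conjunction of integer linear
inequalities. -/
abbrev TAGCZData :=
  List (ℕ × ℕ) × List (ℕ × List ℕ × ℕ) × List ℕ × List (ℕ × ℕ) × List LinData

def decodeTAGCZ (d : TAGCZData) : TABG ℕ ℕ :=
  { arity := decodeArity d.1
    stQ := (d.2.1.flatMap (fun r => r.2.2 :: r.2.1)).toFinset ∪ d.2.2.1.toFinset
    rules := d.2.1.map (fun r => ⟨r.1, r.2.1, [], [], r.2.2⟩)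
    final := d.2.2.1
    eqs := []
    gc := conjList
      (d.2.2.2.1.map (fun qq => GC.atom (GAtom.eq qq.1 qq.2)) ++
       d.2.2.2.2.map (fun la => GC.atom (GAtom.cnt la.1 la.2))) }

/-- A tree language over the ranked signature `ar` is regular if it is the
language of a plain tree automaton. -/
def IsRegular (ar : ℕ → ℕ) (L : Set (RTerm ℕ)) : Prop :=
  ∃ (n : ℕ) (B : TABG ℕ (Fin n)), B.arity = ar ∧ B.WF ∧ B.IsTA ∧ B.Lang = L

/-! ### Automata classes as predicates -/

/-- A TAGED: a TAG whose constraint is a conjunction of atoms `q ≈ q'`, `q ≉ q'`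
without reflexive disequalities. -/
def TAGEDCond {F Q : Type} (A : TABG F Q) : Prop :=
  A.IsTAG ∧ A.gc.IsConjAtoms ∧ A.gc.AtomsAre GAtom.IsEqNeq ∧ A.gc.NoReflNeq

/-- A positive conjunctive TAG with eq/neq atoms (`TAG^∧[≈,≉]`). -/
def TAGCwCond {F Q : Type} (A : TABG F Q) : Prop :=
  A.IsTAG ∧ A.gc.IsConjAtoms ∧ A.gc.AtomsAre GAtom.IsEqNeq

end TreeAut

namespace TreeAut



















-- GPAUX-BEGIN
section GPAux

open RTerm

/-! #### List utilities -/

private lemma gp_get?_append {α : Type*} (L R : List α) (u : α) :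
    (L ++ u :: R)[L.length]? = some u := by
  simp

private lemma gp_set_append {α : Type*} (L R : List α) (u w : α) :
    (L ++ u :: R).set L.length w = L ++ w :: R := by
  induction L with
  | nil => rfl
  | cons a L ih => simp [ih]

private lemma gp_set_self {α : Type*} {l : List α} {n : ℕ} {a : α}
    (h : l[n]? = some a) : l.set n a = l := by
  obtain ⟨hn, rfl⟩ := List.getElem?_eq_some_iff.1 h
  simp

private lemma gp_get?_map {α β : Type*} (f : α → β) {l : List α} {n : ℕ} {a : α}
    (h : l[n]? = some a) : (l.map f)[n]? = some (f a) := by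
  simp [h]

private lemma gp_get?_map_ex {α β : Type*} {f : α → β} {l : List α} {n : ℕ} {b : β}
    (h : (l.map f)[n]? = some b) : ∃ a, l[n]? = some a ∧ b = f a := by
  simp only [List.getElem?_map] at h
  cases hl : l[n]? with
  | none => rw [hl] at h; simp at h
  | some a =>
    rw [hl] at h
    exact ⟨a, by simp [hl], by simpa using h.symm⟩

private lemma gp_get?_lt {α : Type*} {l : List α} {n : ℕ} (h : n < l.length) :
    ∃ a, l[n]? = some a := by
  exact ⟨l[n], List.getElem?_eq_getElem h⟩

private lemma gp_lt_of_get? {α : Type*} {l : List α} {n : ℕ} {a : α}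
    (h : l[n]? = some a) : n < l.length := by
  exact (List.getElem?_eq_some_iff.1 h).1

private lemma gp_get?_set_self {α : Type*} {l : List α} {n : ℕ} {a : α} (b : α)
    (h : l[n]? = some a) : (l.set n b)[n]? = some b := by
  have hn : n < l.length := gp_lt_of_get? h
  simp [hn]

private lemma gp_get?_set_ne {α : Type*} (l : List α) {n m : ℕ} (b : α) (h : n ≠ m) :
    (l.set n b)[m]? = l[m]? :=
  List.getElem?_set_ne h

private lemma gp_mem_get? {α : Type*} {l : List α} {a : α} (h : a ∈ l) :
    ∃ n : ℕ, l[n]? = some a := List.mem_iff_getElem?.1 h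

private lemma gp_get?_mem {α : Type*} {l : List α} {n : ℕ} {a : α}
    (h : l[n]? = some a) : a ∈ l := List.mem_of_getElem? h

private lemma gp_le_foldr_max {l : List ℕ} {x : ℕ} (h : x ∈ l) :
    x ≤ l.foldr max 0 := by
  induction l with
  | nil => simp at h
  | cons b l ih =>
    rcases List.mem_cons.1 h with rfl | h
    · exact le_max_left _ _
    · exact le_trans (ih h) (le_max_right _ _)

private lemma gp_foldr_max_le {l : List ℕ} {B : ℕ} (h : ∀ x ∈ l, x ≤ B) :
    l.foldr max 0 ≤ B := by
  induction l with
  | nil => simp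
  | cons b l ih =>
    simp only [List.foldr_cons, max_le_iff]
    exact ⟨h b (List.mem_cons_self), ih (fun x hx => h x (List.mem_cons_of_mem _ hx))⟩

/-! #### Term induction -/

private theorem gp_ind {F : Type} {motive : RTerm F → Prop}
    (h : ∀ f ts, (∀ t ∈ ts, motive t) → motive (RTerm.node f ts)) :
    ∀ t, motive t
  | .node f ts => h f ts (fun u hu => gp_ind h u)
decreasing_by
  simp only [RTerm.node.sizeOf_spec]
  have := List.sizeOf_lt_of_mem hu
  omega

private lemma gp_map_node {F G : Type} (g : F → G) (f : F) (ts : List (RTerm F)) :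
    RTerm.map g (RTerm.node f ts) = RTerm.node (g f) (ts.map (RTerm.map g)) := by
  rw [RTerm.map]
  simp

private lemma gp_term_node {F Q : Type} (ρ : Rule F Q) (ts : List (Run F Q)) :
    Run.term (RTerm.node ρ ts) = RTerm.node ρ.sym (ts.map Run.term) :=
  gp_map_node _ _ _

/-! #### Heights -/

private def gp_hL {F : Type} (ts : List (RTerm F)) : ℕ :=
  (ts.map (fun t => t.height + 1)).foldr max 0

private lemma gp_height_node {F : Type} (f : F) (ts : List (RTerm F)) :
    (RTerm.node f ts).height = gp_hL ts := by
  induction ts with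
  | nil => simp [RTerm.height, gp_hL]
  | cons t ts ih => rw [RTerm.height, ih]; simp [gp_hL]

private lemma gp_height_child_lt {F : Type} {f : F} {ts : List (RTerm F)} {k : ℕ}
    {u : RTerm F} (h : ts[k]? = some u) : u.height < (RTerm.node f ts).height := by
  rw [gp_height_node]
  have : u.height + 1 ≤ gp_hL ts :=
    gp_le_foldr_max (List.mem_map_of_mem (gp_get?_mem h))
  omega

private lemma gp_exists_max_child {F : Type} {f : F} {ts : List (RTerm F)} {n : ℕ}
    (h : (RTerm.node f ts).height = n + 1) :
    ∃ k : ℕ, ∃ u, ts[k]? = some u ∧ u.height = n := by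
  rw [gp_height_node] at h
  induction ts with
  | nil => simp [gp_hL] at h
  | cons t ts ih =>
    simp only [gp_hL, List.map_cons, List.foldr_cons] at h
    rcases max_choice (t.height + 1) ((ts.map (fun t => t.height + 1)).foldr max 0) with hc | hc
    · exact ⟨0, t, rfl, by omega⟩
    · obtain ⟨k, u, hk, hu⟩ := ih (by rw [gp_hL]; omega)
      exact ⟨k + 1, u, hk, hu⟩

private lemma gp_height_zero {F : Type} {f : F} {ts : List (RTerm F)}
    (h : (RTerm.node f ts).height = 0) : ts = [] := by
  cases ts with
  | nil => rfl
  | cons t ts => simp [RTerm.height] at h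

private lemma gp_height_set {F : Type} (f : F) {ts : List (RTerm F)} {k : ℕ}
    {u u' : RTerm F} (hget : ts[k]? = some u) (hh : u'.height = u.height) :
    (RTerm.node f (ts.set k u')).height = (RTerm.node f ts).height := by
  rw [gp_height_node, gp_height_node, gp_hL, gp_hL, List.map_set, hh,
    gp_set_self (gp_get?_map _ hget)]

private lemma gp_height_map {F G : Type} (g : F → G) :
    ∀ t : RTerm F, (RTerm.map g t).height = t.height := by
  refine gp_ind (fun f ts ih => ?_)
  rw [gp_map_node, gp_height_node, gp_height_node, gp_hL, gp_hL, List.map_map]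
  congr 1
  exact List.map_congr_left (fun t ht => by simp [ih t ht])

/-! #### SubAt / ReplAt -/

private lemma gp_subAt_nil {F : Type} {t s : RTerm F} (h : SubAt t [] s) : s = t := by
  cases h; rfl

private lemma gp_subAt_det {F : Type} {t : RTerm F} {p : List ℕ} {s s' : RTerm F}
    (h : SubAt t p s) (h' : SubAt t p s') : s = s' := by
  induction h with
  | refl => exact (gp_subAt_nil h').symm
  | step hget hsub ih =>
    cases h' with
    | step hget' hsub' =>
      rw [hget] at hget'
      cases hget'
      exact ih hsub'

private lemma gp_subAt_append {F : Type} {t u s : RTerm F} {p q : List ℕ}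
    (h : SubAt t p u) (h' : SubAt u q s) : SubAt t (p ++ q) s := by
  induction h with
  | refl => exact h'
  | step hget hsub ih => exact SubAt.step hget (ih h')

private lemma gp_subAt_split {F : Type} {t s : RTerm F} {p q : List ℕ}
    (h : SubAt t (p ++ q) s) : ∃ u, SubAt t p u ∧ SubAt u q s := by
  induction p generalizing t with
  | nil => exact ⟨t, SubAt.refl t, h⟩
  | cons k p ih =>
    cases h with
    | step hget hsub =>
      obtain ⟨u, hu, hus⟩ := ih hsub
      exact ⟨u, SubAt.step hget hu, hus⟩

private lemma gp_subAt_map {F G : Type} (g : F → G) {t s : RTerm F} {p : List ℕ}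
    (h : SubAt t p s) : SubAt (RTerm.map g t) p (RTerm.map g s) := by
  induction h with
  | refl => exact SubAt.refl _
  | step hget hsub ih =>
    rw [gp_map_node]
    exact SubAt.step (gp_get?_map _ hget) ih

private lemma gp_height_subAt_le {F : Type} {t s : RTerm F} {p : List ℕ}
    (h : SubAt t p s) : s.height ≤ t.height := by
  induction h with
  | refl => exact le_refl _
  | step hget hsub ih => exact le_trans ih (le_of_lt (gp_height_child_lt hget))

private lemma gp_height_subAt_lt {F : Type} {t s : RTerm F} {k : ℕ} {p : List ℕ}
    (h : SubAt t (k :: p) s) : s.height < t.height := by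
  cases h with
  | step hget hsub => exact lt_of_le_of_lt (gp_height_subAt_le hsub) (gp_height_child_lt hget)

private lemma gp_replAt_nil {F : Type} {t s t' : RTerm F} (h : ReplAt t [] s t') : t' = s := by
  cases h; rfl

private lemma gp_replAt_subAt {F : Type} {t s t' : RTerm F} {p : List ℕ}
    (h : ReplAt t p s t') : SubAt t' p s := by
  induction h with
  | here => exact SubAt.refl _
  | step hget hrepl ih => exact SubAt.step (gp_get?_set_self _ hget) ih

private lemma gp_replAt_exists {F : Type} {t u : RTerm F} {p : List ℕ}
    (h : SubAt t p u) (v : RTerm F) : ∃ t', ReplAt t p v t' := by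
  induction h with
  | refl => exact ⟨v, ReplAt.here _ _⟩
  | step hget hsub ih =>
    obtain ⟨u', hu'⟩ := ih
    exact ⟨_, ReplAt.step hget hu'⟩

private lemma gp_replAt_back {F : Type} {t v t' : RTerm F} {p : List ℕ}
    (h : ReplAt t p v t') : ∀ u, SubAt t p u → ReplAt t' p u t := by
  induction h with
  | here t s =>
    intro u hs
    rw [gp_subAt_nil hs]
    exact ReplAt.here _ _
  | @step f ts k c c' vv q hget hrepl ih =>
    intro u hs
    cases hs with
    | step hget' hsub =>
      rw [hget] at hget'
      cases hget'
      have := ReplAt.step (f := f) (gp_get?_set_self c' hget) (ih _ hsub)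
      rwa [List.set_set, gp_set_self hget] at this

private lemma gp_replAt_self {F : Type} {t u t' : RTerm F} {p : List ℕ}
    (h : ReplAt t p u t') (hs : SubAt t p u) : t' = t := by
  induction h with
  | here => exact gp_subAt_nil hs
  | step hget hrepl ih =>
    cases hs with
    | step hget' hsub =>
      rw [hget] at hget'
      cases hget'
      rw [ih hsub, gp_set_self hget]

private lemma gp_replAt_compose {F : Type} {t u v w t' : RTerm F} {p q : List ℕ}
    (hs : SubAt t p u) (h1 : ReplAt u q v w) (h2 : ReplAt t p w t') :
    ReplAt t (p ++ q) v t' := by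
  induction p generalizing t t' with
  | nil =>
    rw [gp_subAt_nil hs] at h1
    rw [gp_replAt_nil h2]
    exact h1
  | cons k p ih =>
    cases hs with
    | step hget hsub =>
      cases h2 with
      | step hget2 hrepl2 =>
        rw [hget] at hget2
        cases hget2
        exact ReplAt.step hget (ih hsub hrepl2)

private lemma gp_replAt_replAt {F : Type} {t a b t1 t2 : RTerm F} {p : List ℕ}
    (h1 : ReplAt t p a t1) (h2 : ReplAt t p b t2) : ReplAt t1 p b t2 := by
  induction h1 generalizing t2 with
  | here => exact (gp_replAt_nil h2) ▸ ReplAt.here _ _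
  | @step f ts k c c' vv q hget hrepl ih =>
    cases h2 with
    | step hget2 hrepl2 =>
      rw [hget] at hget2
      cases hget2
      have := ReplAt.step (f := f) (gp_get?_set_self c' hget) (ih hrepl2)
      rwa [List.set_set] at this

private lemma gp_replAt_height {F : Type} {t v t' : RTerm F} {p : List ℕ}
    (h : ReplAt t p v t') : ∀ u, SubAt t p u → v.height = u.height →
    t'.height = t.height := by
  induction h with
  | here =>
    intro u hs hh
    rw [gp_subAt_nil hs] at hh; exact hh
  | step hget hrepl ih =>
    intro u hs hh
    cases hs with
    | step hget' hsub =>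
      rw [hget] at hget'
      cases hget'
      exact gp_height_set _ hget (ih _ hsub hh)

/-! #### EqE basics -/

private lemma gp_eqE_single {F : Type} {E : List (Pat F × Pat F)} {s t : RTerm F}
    (h : Rew E s t) : EqE E s t :=
  Relation.ReflTransGen.single h

private lemma gp_rew_symm {F : Type} {E : List (Pat F × Pat F)} {s t : RTerm F}
    (h : Rew E s t) : Rew E t s := by
  obtain ⟨l, r, hm, σ, p, hsub, hrepl⟩ := h
  exact ⟨r, l, hm.symm, σ, p, gp_replAt_subAt hrepl, gp_replAt_back hrepl (Pat.subst σ l) hsub⟩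

private lemma gp_eqE_symm {F : Type} {E : List (Pat F × Pat F)} {s t : RTerm F}
    (h : EqE E s t) : EqE E t s := by
  induction h with
  | refl => exact Relation.ReflTransGen.refl
  | tail hst hr ih => exact Relation.ReflTransGen.head (gp_rew_symm hr) ih

private lemma gp_rew_lift {F : Type} {E : List (Pat F × Pat F)} {u w t t' : RTerm F}
    {p : List ℕ} (h : Rew E u w) (hs : SubAt t p u) (hr : ReplAt t p w t') :
    Rew E t t' := by
  obtain ⟨l, r, hm, σ, q, hsub, hrepl⟩ := h
  exact ⟨l, r, hm, σ, p ++ q, gp_subAt_append hs hsub, gp_replAt_compose hs hrepl hr⟩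

private lemma gp_eqE_lift {F : Type} {E : List (Pat F × Pat F)} {u v : RTerm F}
    (h : EqE E u v) : ∀ {t t' : RTerm F} {p : List ℕ},
    SubAt t p u → ReplAt t p v t' → EqE E t t' := by
  induction h using Relation.ReflTransGen.head_induction_on with
  | refl =>
    intro t t' p hs hr
    rw [gp_replAt_self hr hs]
    exact Relation.ReflTransGen.refl
  | @head x x₁ hr1 hchain ih =>
    intro t t' p hs hr
    obtain ⟨t₁, ht₁⟩ := gp_replAt_exists hs x₁
    exact Relation.ReflTransGen.head (gp_rew_lift hr1 hs ht₁)
      (ih (gp_replAt_subAt ht₁) (gp_replAt_replAt ht₁ hr))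

private lemma gp_eqE_child {F : Type} {E : List (Pat F × Pat F)} (f : F)
    (L R : List (RTerm F)) {u v : RTerm F} (h : EqE E u v) :
    EqE E (RTerm.node f (L ++ u :: R)) (RTerm.node f (L ++ v :: R)) := by
  have hs : SubAt (RTerm.node f (L ++ u :: R)) [L.length] u :=
    SubAt.step (gp_get?_append L R u) (SubAt.refl u)
  have hr : ReplAt (RTerm.node f (L ++ u :: R)) [L.length] v
      (RTerm.node f ((L ++ u :: R).set L.length v)) :=
    ReplAt.step (gp_get?_append L R u) (ReplAt.here u v)
  rw [gp_set_append] at hr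
  exact gp_eqE_lift h hs hr

private lemma gp_eqE_congr {F : Type} {E : List (Pat F × Pat F)} (f : F) :
    ∀ (ts : List (RTerm F)) (L ts' : List (RTerm F)), ts.length = ts'.length →
    (∀ (k : ℕ) u u', ts[k]? = some u → ts'[k]? = some u' → EqE E u u') →
    EqE E (RTerm.node f (L ++ ts)) (RTerm.node f (L ++ ts')) := by
  intro ts
  induction ts with
  | nil =>
    intro L ts' hlen _
    rw [List.length_nil] at hlen
    rw [(List.length_eq_zero_iff.1 hlen.symm)]
    exact Relation.ReflTransGen.refl
  | cons u ts ih =>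
    intro L ts' hlen hpt
    cases ts' with
    | nil => simp at hlen
    | cons u' ts' =>
      have h0 : EqE E u u' := hpt 0 u u' rfl rfl
      have step1 : EqE E (RTerm.node f (L ++ u :: ts)) (RTerm.node f (L ++ u' :: ts)) :=
        gp_eqE_child f L ts h0
      have step2 : EqE E (RTerm.node f ((L ++ [u']) ++ ts))
          (RTerm.node f ((L ++ [u']) ++ ts')) := by
        refine ih (L ++ [u']) ts' (by simpa using hlen) ?_
        intro k a b ha hb
        exact hpt (k + 1) a b ha hb
      simp only [List.append_assoc, List.singleton_append] at step2
      exact Relation.ReflTransGen.trans step1 step2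

private lemma gp_eqE_node {F : Type} {E : List (Pat F × Pat F)} (f : F)
    {ts ts' : List (RTerm F)} (hlen : ts.length = ts'.length)
    (hpt : ∀ (k : ℕ) u u', ts[k]? = some u → ts'[k]? = some u' → EqE E u u') :
    EqE E (RTerm.node f ts) (RTerm.node f ts') := by
  have := gp_eqE_congr f ts [] ts' hlen hpt
  simpa using this

/-! #### Patterns and flat equations -/

private lemma gp_subst_node {F : Type} (σ : ℕ → RTerm F) (f : F) (ps : List (Pat F)) :
    Pat.subst σ (Pat.node f ps) = RTerm.node f (ps.map (Pat.subst σ)) := by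
  rw [Pat.subst]
  simp

private lemma gp_pheight_cons {F : Type} (f : F) (p : Pat F) (ps : List (Pat F)) :
    (Pat.node f (p :: ps)).height = max (p.height + 1) (Pat.node f ps).height := by
  simp [Pat.height]

private lemma gp_pchild_height {F : Type} {f : F} {ps : List (Pat F)}
    (h : (Pat.node f ps).height ≤ 1) : ∀ p ∈ ps, p.height = 0 := by
  induction ps with
  | nil => simp
  | cons q ps ih =>
    rw [gp_pheight_cons] at h
    intro p hp
    rcases List.mem_cons.1 hp with rfl | hp
    · omega
    · exact ih (by omega) p hp

private lemma gp_pat0 {F : Type} {p : Pat F} (h : p.height = 0) :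
    (∃ v, p = Pat.var v) ∨ (∃ c, p = Pat.node c []) := by
  cases p with
  | var v => exact Or.inl ⟨v, rfl⟩
  | node c ps =>
    cases ps with
    | nil => exact Or.inr ⟨c, rfl⟩
    | cons q ps => rw [gp_pheight_cons] at h; omega

private lemma gp_hasVar_var {F : Type} {v w : ℕ} (h : Pat.HasVar v (Pat.var w : Pat F)) :
    v = w := by cases h; rfl

private lemma gp_hasVar_const {F : Type} {v : ℕ} {c : F}
    (h : Pat.HasVar v (Pat.node c [])) : False := by
  cases h with
  | node hmem _ => simp at hmem

private lemma gp_hasVar_node {F : Type} {v : ℕ} {f : F} {ps : List (Pat F)}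
    (h : Pat.HasVar v (Pat.node f ps)) : ∃ p ∈ ps, Pat.HasVar v p := by
  cases h with
  | node hmem hv => exact ⟨_, hmem, hv⟩

private lemma gp_node_ne_nil_of_height {F : Type} {f : F} {ps : List (Pat F)}
    (h : (Pat.node f ps).height = 1) : ps ≠ [] := by
  intro he
  subst he
  simp [Pat.height] at h

private lemma gp_flat_height_le {F : Type} {l r : Pat F} (σ : ℕ → RTerm F)
    (hh : l.height = r.height) (h1 : l.height ≤ 1)
    (hv : ∀ v, Pat.HasVar v l → Pat.HasVar v r) :
    (l.subst σ).height ≤ (r.subst σ).height := by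
  rcases Nat.le_one_iff_eq_zero_or_eq_one.1 h1 with hl | hl
  · -- height 0
    rcases gp_pat0 hl with ⟨x, rfl⟩ | ⟨c, rfl⟩
    · -- l = var x
      have hxr : Pat.HasVar x r := hv x Pat.HasVar.var
      rcases gp_pat0 (hh.symm.trans hl) with ⟨y, rfl⟩ | ⟨c, rfl⟩
      · cases hxr; exact le_refl _
      · exact absurd hxr gp_hasVar_const
    · -- l = const c
      show (Pat.subst σ (Pat.node c [])).height ≤ _
      rw [gp_subst_node]
      simp [gp_height_node, gp_hL]
  · -- height 1
    cases l with
    | var x => simp [Pat.height] at hl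
    | node f ps =>
      have hr1 : r.height = 1 := hh.symm.trans hl
      cases r with
      | var y => simp [Pat.height] at hr1
      | node g qs =>
        rw [gp_subst_node, gp_subst_node, gp_height_node, gp_height_node]
        have hqs : qs ≠ [] := gp_node_ne_nil_of_height hr1
        refine gp_foldr_max_le ?_
        intro x hx
        obtain ⟨u, hu, rfl⟩ := by
          simpa only [List.map_map, List.mem_map, Function.comp] using hx
        have hu0 : u.height = 0 := gp_pchild_height (le_of_eq hl) u hu
        rcases gp_pat0 hu0 with ⟨y, rfl⟩ | ⟨c, rfl⟩
        · -- variable child : σ y occurs as a child of r's instance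
          have hyr : Pat.HasVar y (Pat.node g qs) :=
            hv y (Pat.HasVar.node hu Pat.HasVar.var)
          obtain ⟨q, hq, hyq⟩ := gp_hasVar_node hyr
          have hq0 : q.height = 0 := gp_pchild_height (le_of_eq hr1) q hq
          have hqy : q = Pat.var y := by
            rcases gp_pat0 hq0 with ⟨z, rfl⟩ | ⟨c, rfl⟩
            · rw [gp_hasVar_var hyq]
            · exact absurd hyq gp_hasVar_const
          subst hqy
          have hsv : Pat.subst σ (Pat.var y) = σ y := by rw [Pat.subst]
          have : (σ y).height + 1 ≤ gp_hL (qs.map (Pat.subst σ)) := by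
            refine gp_le_foldr_max ?_
            exact List.mem_map.2 ⟨Pat.subst σ (Pat.var y), List.mem_map_of_mem hq, by rw [hsv]⟩
          have hsv' : Pat.subst σ (Pat.var y : Pat F) = σ y := by rw [Pat.subst]
          rw [hsv']
          simpa [gp_hL] using this
        · -- constant child : contributes 1
          obtain ⟨q, hq⟩ := List.exists_mem_of_ne_nil qs hqs
          have : (Pat.subst σ q).height + 1 ≤ gp_hL (qs.map (Pat.subst σ)) :=
            gp_le_foldr_max (List.mem_map.2 ⟨Pat.subst σ q, List.mem_map_of_mem hq, rfl⟩)
          have h0 : (Pat.subst σ (Pat.node c [] : Pat F)).height = 0 := by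
            rw [gp_subst_node]; simp [gp_height_node, gp_hL]
          rw [h0]
          simp only [gp_hL] at this ⊢
          omega

private lemma gp_flat_height_eq {F : Type} {l r : Pat F} (σ : ℕ → RTerm F)
    (hh : l.height = r.height) (h1 : l.height ≤ 1)
    (hv : ∀ v, Pat.HasVar v l ↔ Pat.HasVar v r) :
    (l.subst σ).height = (r.subst σ).height :=
  le_antisymm (gp_flat_height_le σ hh h1 (fun v => (hv v).1))
    (gp_flat_height_le σ hh.symm (hh ▸ h1) (fun v => (hv v).2))

/-- The flatness data we need for a theory. -/
private def gpFlat {F : Type} (E : List (Pat F × Pat F)) : Prop :=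
  ∀ l r : Pat F, ((l, r) ∈ E ∨ (r, l) ∈ E) →
    l.height = r.height ∧ l.height ≤ 1 ∧ (∀ v, Pat.HasVar v l ↔ Pat.HasVar v r)

private lemma gp_flat_of_wf {F : Type} {E : List (Pat F × Pat F)} {ar : F → ℕ}
    (h : ∀ e ∈ E, IsFlatEq ar e) : gpFlat E := by
  intro l r hm
  rcases hm with hm | hm
  · obtain ⟨_, _, h1, h2, h3⟩ := h _ hm
    exact ⟨h1, h2, h3⟩
  · obtain ⟨_, _, h1, h2, h3⟩ := h _ hm
    have h1' : r.height = l.height := h1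
    have h2' : r.height ≤ 1 := h2
    have h3' : ∀ v, Pat.HasVar v r ↔ Pat.HasVar v l := h3
    exact ⟨h1'.symm, by rw [← h1']; exact h2', fun v => (h3' v).symm⟩

private lemma gp_rew_height {F : Type} {E : List (Pat F × Pat F)} (hE : gpFlat E)
    {s t : RTerm F} (h : Rew E s t) : s.height = t.height := by
  obtain ⟨l, r, hm, σ, p, hsub, hrepl⟩ := h
  obtain ⟨h1, h2, h3⟩ := hE l r hm
  exact (gp_replAt_height hrepl _ hsub (gp_flat_height_eq σ h1 h2 h3).symm).symm

private lemma gp_eqE_height {F : Type} {E : List (Pat F × Pat F)} (hE : gpFlat E)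
    {s t : RTerm F} (h : EqE E s t) : s.height = t.height := by
  induction h with
  | refl => rfl
  | tail _ hr ih => exact ih.trans (gp_rew_height hE hr)

/-! #### The abstraction relation -/

private inductive GAbs {F : Type} (E : List (Pat F × Pat F))
    (P : RTerm F → RTerm F → Prop) (m : ℕ) : RTerm F → RTerm F → Prop
  | base {a a₀ b : RTerm F} : P a₀ b → EqE E a a₀ → GAbs E P m a b
  | const (c : F) : GAbs E P m (RTerm.node c []) (RTerm.node c [])
  | node {f : F} {ts ts' : List (RTerm F)} :
      m < (RTerm.node f ts).height → ts.length = ts'.length →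
      (∀ (k : ℕ) u u', ts[k]? = some u → ts'[k]? = some u' → GAbs E P m u u') →
      GAbs E P m (RTerm.node f ts) (RTerm.node f ts')

section AbsLemmas

variable {F : Type} {E : List (Pat F × Pat F)} {P : RTerm F → RTerm F → Prop} {m : ℕ}
variable (hE : gpFlat E)
variable (hP0 : ∀ a b, P a b → a.height ≤ m)
variable (hP1 : ∀ a b, P a b → a.height = 0 → b = a)
variable (hP2 : ∀ a b a' b', P a b → P a' b' → (EqE E a a' ↔ EqE E b b'))

include hE hP0 hP1 hP2

private lemma gp_abs_fun {t b1 : RTerm F} (h1 : GAbs E P m t b1) :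
    ∀ b2, GAbs E P m t b2 → EqE E b1 b2 := by
  induction h1 with
  | @base a a₀ b hP heq =>
    intro b2 h2
    cases h2 with
    | @base _ a₀' b2' hP' heq' =>
      exact (hP2 _ _ _ _ hP hP').1 (Relation.ReflTransGen.trans (gp_eqE_symm heq) heq')
    | const c =>
      have h0 : a₀.height = 0 := by
        have := gp_eqE_height hE heq
        rw [← this, gp_height_node]
        rfl
      rw [hP1 _ _ hP h0]
      exact gp_eqE_symm heq
    | node hgt hlen hpt =>
      have := gp_eqE_height hE heq
      have := hP0 _ _ hP
      omega
  | const c =>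
    intro b2 h2
    cases h2 with
    | @base _ a₀' b2' hP' heq' =>
      have h0 : a₀'.height = 0 := by
        have := gp_eqE_height hE heq'
        rw [← this, gp_height_node]
        rfl
      rw [hP1 _ _ hP' h0]
      exact heq'
    | const => exact Relation.ReflTransGen.refl
    | node hgt hlen hpt =>
      rw [gp_height_node] at hgt
      simp [gp_hL] at hgt
  | @node f ts ts' hgt hlen hpt ih =>
    intro b2 h2
    cases h2 with
    | @base _ a₀' b2' hP' heq' =>
      have := gp_eqE_height hE heq'
      have := hP0 _ _ hP'
      omega
    | const =>
      rw [gp_height_node] at hgt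
      simp [gp_hL] at hgt
    | @node _ _ ts'' hgt2 hlen2 hpt2 =>
      refine gp_eqE_node f (hlen.symm.trans hlen2) ?_
      intro k u' u'' hget' hget''
      obtain ⟨u, hget⟩ := gp_get?_lt (l := ts) (by rw [hlen]; exact gp_lt_of_get? hget')
      exact ih k u u' hget hget' u'' (hpt2 k u u'' hget hget'')

end AbsLemmas

section AbsStep

variable {F : Type} {E : List (Pat F × Pat F)} {P : RTerm F → RTerm F → Prop} {m : ℕ}
variable (hE : gpFlat E)
variable (hP0 : ∀ a b, P a b → a.height ≤ m)
variable (hP1 : ∀ a b, P a b → a.height = 0 → b = a)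
variable (hP2 : ∀ a b a' b', P a b → P a' b' → (EqE E a a' ↔ EqE E b b'))

include hE hP0 hP1 hP2

private lemma gp_abs_step {s b : RTerm F} (habs : GAbs E P m s b) :
    ∀ t, Rew E s t → ∃ b', GAbs E P m t b' ∧ EqE E b b' := by
  induction habs with
  | @base a a₀ bb hP heq =>
    intro t hrew
    exact ⟨bb, GAbs.base hP (Relation.ReflTransGen.trans
      (gp_eqE_single (gp_rew_symm hrew)) heq), Relation.ReflTransGen.refl⟩
  | const c =>
    intro t hrew
    have hht : t.height = 0 := by
      have := gp_rew_height hE hrew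
      rw [← this, gp_height_node]
      rfl
    obtain ⟨g, ts⟩ := t
    rw [gp_height_zero hht]
    exact ⟨RTerm.node g [], GAbs.const g, gp_eqE_single (by rwa [gp_height_zero hht] at hrew)⟩
  | @node f ss ss' hgt hlen hpt ih =>
    intro t hrew
    obtain ⟨l, r, hm, σ, p, hsub, hrepl⟩ := hrew
    have hrewst : Rew E (RTerm.node f ss) t := ⟨l, r, hm, σ, p, hsub, hrepl⟩
    have hts : t.height = (RTerm.node f ss).height := (gp_rew_height hE hrewst).symm
    cases p with
    | nil =>
      -- root rewriting step
      have hsl : RTerm.node f ss = Pat.subst σ l := (gp_subAt_nil hsub).symm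
      have htr : t = Pat.subst σ r := gp_replAt_nil hrepl
      obtain ⟨hh, h1, hv⟩ := hE l r hm
      cases l with
      | var x =>
        -- l is a variable, the equation is trivial
        have hr0 : r.height = 0 := by rw [← hh]; simp [Pat.height]
        rcases gp_pat0 hr0 with ⟨y, rfl⟩ | ⟨c, rfl⟩
        · have hxy : x = y := by
            have := (hv x).1 Pat.HasVar.var
            cases this; rfl
          subst hxy
          have : t = RTerm.node f ss := by rw [htr, ← hsl]
          rw [this]
          exact ⟨RTerm.node f ss', GAbs.node hgt hlen hpt, Relation.ReflTransGen.refl⟩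
        · exact absurd ((hv x).1 Pat.HasVar.var) (fun h => gp_hasVar_const h)
      | node lf ps =>
        rw [gp_subst_node] at hsl
        injection hsl with hf hss
        subst hf
        have hl1 : (Pat.node f ps).height = 1 := by
          rcases Nat.le_one_iff_eq_zero_or_eq_one.1 h1 with h0 | h0
          · exfalso
            rcases gp_pat0 h0 with ⟨v, hveq⟩ | ⟨c, hceq⟩
            · cases hveq
            · have hps : ps = [] := by cases hceq; rfl
              rw [hps] at hss
              simp at hss
              rw [hss, gp_height_node] at hgt
              simp [gp_hL] at hgt
          · exact h0
        have hr1 : r.height = 1 := hh.symm.trans hl1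
        cases r with
        | var y => simp [Pat.height] at hr1
        | node g qs =>
          rw [gp_subst_node] at htr
          -- choice of representatives for the variables
          classical
          set σ' : ℕ → RTerm F := fun x =>
            if h : ∃ u, ∃ k : ℕ, ps[k]? = some (Pat.var x) ∧ ss'[k]? = some u
            then h.choose else σ x with hσ'
          have hlen2 : ss'.length = ps.length := by
            rw [← hlen, hss, List.length_map]
          have hsplen : ss.length = ps.length := by rw [hss, List.length_map]
          -- key fact : GAbs (σ x) (σ' x) whenever x occurs in l
          have habsvar : ∀ x (k : ℕ), ps[k]? = some (Pat.var x) → GAbs E P m (σ x) (σ' x) := by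
            intro x k hk
            have hex : ∃ u, ∃ k : ℕ, ps[k]? = some (Pat.var x) ∧ ss'[k]? = some u := by
              obtain ⟨u, hu⟩ := gp_get?_lt (l := ss') (by rw [hlen2]; exact gp_lt_of_get? hk)
              exact ⟨u, k, hk, hu⟩
            obtain ⟨k₀, hk₀, hk₀'⟩ := hex.choose_spec
            have hss0 : ss[k₀]? = some (σ x) := by
              rw [hss]
              have := gp_get?_map (Pat.subst σ) hk₀
              rwa [show Pat.subst σ (Pat.var x) = σ x from by rw [Pat.subst]] at this
            have : σ' x = hex.choose := by rw [hσ']; exact dif_pos hex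
            rw [this]
            exact hpt k₀ _ _ hss0 hk₀'
          -- each child of b is EqE-equal to the corresponding child of (subst σ' l)
          have hchild : ∀ (k : ℕ) q u', ps[k]? = some q → ss'[k]? = some u' →
              EqE E u' (Pat.subst σ' q) := by
            intro k q u' hq hu'
            have hq0 : q.height = 0 := gp_pchild_height (le_of_eq hl1) q (gp_get?_mem hq)
            rcases gp_pat0 hq0 with ⟨x, rfl⟩ | ⟨c, rfl⟩
            · -- variable child
              have hss0 : ss[k]? = some (σ x) := by
                rw [hss]
                have := gp_get?_map (Pat.subst σ) hq
                rwa [show Pat.subst σ (Pat.var x) = σ x from by rw [Pat.subst]] at this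
              have h1 : GAbs E P m (σ x) u' := hpt k _ _ hss0 hu'
              have h2 : GAbs E P m (σ x) (σ' x) := habsvar x k hq
              rw [show Pat.subst σ' (Pat.var x) = σ' x from by rw [Pat.subst]]
              exact gp_abs_fun hE hP0 hP1 hP2 h1 _ h2
            · -- constant child
              have hss0 : ss[k]? = some (RTerm.node c []) := by
                rw [hss]
                have := gp_get?_map (Pat.subst σ) hq
                rwa [show Pat.subst σ (Pat.node c []) = RTerm.node c [] from by
                  rw [gp_subst_node]; simp] at this
              have habsc : GAbs E P m (RTerm.node c []) u' := hpt k _ _ hss0 hu'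
              rw [show Pat.subst σ' (Pat.node c []) = RTerm.node c [] from by
                rw [gp_subst_node]; simp]
              cases habsc with
              | @base _ a₀ _ hPc heqc =>
                have h0 : a₀.height = 0 := by
                  have := gp_eqE_height hE heqc
                  rw [← this, gp_height_node]
                  rfl
                rw [hP1 _ _ hPc h0]
                exact gp_eqE_symm heqc
              | const => exact Relation.ReflTransGen.refl
              | node hgt2 _ _ =>
                rw [gp_height_node] at hgt2
                simp [gp_hL] at hgt2
          -- b is EqE-equal to subst σ' l
          have hb_lσ' : EqE E (RTerm.node f ss') (RTerm.node f (ps.map (Pat.subst σ'))) := by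
            refine gp_eqE_node f (by rw [hlen2, List.length_map]) ?_
            intro k u' w hget' hgetw
            obtain ⟨q, hq, rfl⟩ := gp_get?_map_ex hgetw
            exact hchild k q u' hq hget'
          -- one rewrite step at the root
          have hstep : Rew E (Pat.subst σ' (Pat.node f ps)) (Pat.subst σ' (Pat.node g qs)) :=
            ⟨Pat.node f ps, Pat.node g qs, hm, σ', [], SubAt.refl _, ReplAt.here _ _⟩
          rw [gp_subst_node, gp_subst_node] at hstep
          -- Abs between t and subst σ' r
          have habs_t : GAbs E P m t (RTerm.node g (qs.map (Pat.subst σ'))) := by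
            rw [htr]
            refine GAbs.node (by rw [← htr, hts]; exact hgt) (by simp) ?_
            intro k u u' hget hget'
            obtain ⟨q, hq, rfl⟩ := gp_get?_map_ex hget
            obtain ⟨q2, hq2, rfl⟩ := gp_get?_map_ex hget'
            rw [hq] at hq2
            cases hq2
            have hq0 : q.height = 0 := gp_pchild_height (le_of_eq hr1) q (gp_get?_mem hq)
            rcases gp_pat0 hq0 with ⟨x, rfl⟩ | ⟨c, rfl⟩
            · -- variable child of r
              have hxl : Pat.HasVar x (Pat.node f ps) :=
                (hv x).2 (Pat.HasVar.node (gp_get?_mem hq) Pat.HasVar.var)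
              obtain ⟨pq, hpq, hxpq⟩ := gp_hasVar_node hxl
              have hpq0 : pq.height = 0 := gp_pchild_height (le_of_eq hl1) pq hpq
              have hpqx : pq = Pat.var x := by
                rcases gp_pat0 hpq0 with ⟨z, rfl⟩ | ⟨c, rfl⟩
                · rw [gp_hasVar_var hxpq]
                · exact absurd hxpq (fun h => gp_hasVar_const h)
              subst hpqx
              obtain ⟨k₁, hk₁⟩ := gp_mem_get? hpq
              rw [show Pat.subst σ (Pat.var x) = σ x from by rw [Pat.subst],
                show Pat.subst σ' (Pat.var x) = σ' x from by rw [Pat.subst]]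
              exact habsvar x k₁ hk₁
            · rw [show Pat.subst σ (Pat.node c []) = RTerm.node c [] from by
                  rw [gp_subst_node]; simp,
                show Pat.subst σ' (Pat.node c []) = RTerm.node c [] from by
                  rw [gp_subst_node]; simp]
              exact GAbs.const c
          refine ⟨RTerm.node g (qs.map (Pat.subst σ')), habs_t, ?_⟩
          exact Relation.ReflTransGen.trans hb_lσ' (gp_eqE_single hstep)
    | cons k p' =>
      -- rewriting step inside the k-th child
      cases hsub with
      | step hget hsubc =>
        rename_i c
        cases hrepl with
        | step hget2 hreplc =>
          rename_i c2 c'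
          rw [hget] at hget2
          cases hget2
          have hrewc : Rew E c c' := ⟨l, r, hm, σ, p', hsubc, hreplc⟩
          obtain ⟨u', hget'⟩ := gp_get?_lt (l := ss') (by rw [← hlen]; exact gp_lt_of_get? hget)
          obtain ⟨w, habsw, heqw⟩ := ih k c u' hget hget' c' hrewc
          refine ⟨RTerm.node f (ss'.set k w), ?_, ?_⟩
          · refine GAbs.node ?_ (by simp [hlen]) ?_
            · rw [gp_height_set f hget (gp_rew_height hE hrewc).symm]
              exact hgt
            · intro k' a a' hgeta hgeta'
              by_cases hkk : k = k'
              · subst hkk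
                rw [gp_get?_set_self c' hget] at hgeta
                rw [gp_get?_set_self w hget'] at hgeta'
                cases hgeta; cases hgeta'
                exact habsw
              · rw [gp_get?_set_ne _ _ hkk] at hgeta
                rw [gp_get?_set_ne _ _ hkk] at hgeta'
                exact hpt k' a a' hgeta hgeta'
          · refine gp_eqE_node f (by simp) ?_
            intro k' a a' hgeta hgeta'
            by_cases hkk : k = k'
            · subst hkk
              rw [hget'] at hgeta
              rw [gp_get?_set_self w hget'] at hgeta'
              cases hgeta; cases hgeta'
              exact heqw
            · rw [gp_get?_set_ne _ _ hkk] at hgeta'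
              rw [hgeta] at hgeta'
              cases hgeta'
              exact Relation.ReflTransGen.refl

private lemma gp_abs_main {s t : RTerm F} (h : EqE E s t) :
    ∀ b b', GAbs E P m s b → GAbs E P m t b' → EqE E b b' := by
  induction h using Relation.ReflTransGen.head_induction_on with
  | refl =>
    intro b b' hb hb'
    exact gp_abs_fun hE hP0 hP1 hP2 hb _ hb'
  | @head x x₁ hr1 hchain ih =>
    intro b b' hb hb'
    obtain ⟨b₁, habs₁, heq₁⟩ := gp_abs_step hE hP0 hP1 hP2 hb _ hr1
    exact Relation.ReflTransGen.trans heq₁ (ih b₁ b' habs₁ hb')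

end AbsStep

/-! #### Dom and MultiRepl -/

private lemma gp_term_height {F Q : Type} (u : Run F Q) :
    (Run.term u).height = u.height := gp_height_map _ u

private lemma gp_dom_subAt {F Q : Type} {r : Run F Q} {i : ℕ} {p : List ℕ}
    (hD : p ∈ Dom r i) : ∃ s, SubAt r p s := by
  rcases hD with (h | h) | h
  · obtain ⟨s₀, hs₀, -⟩ := h; exact ⟨s₀, hs₀⟩
  · obtain ⟨pp, jj, sp, s', hpeq, hsp, hs', -⟩ := h; exact ⟨s', hs'⟩
  · obtain ⟨pp, jj, sp, s', hpeq, hsp, hs', -⟩ := h; exact ⟨s', hs'⟩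

private lemma gp_dom_height {F Q : Type} {r : Run F Q} {i : ℕ} {p : List ℕ}
    {s : Run F Q} (hD : p ∈ Dom r i) (hs : SubAt r p s) : s.height ≤ i := by
  rcases hD with (h | h) | h
  · obtain ⟨s₀, hs₀, _, he⟩ := h
    rw [gp_subAt_det hs hs₀]; omega
  · obtain ⟨pp, jj, sp, s', hpeq, hsp, hs', h0, hlt, hgt⟩ := h
    rw [gp_subAt_det hs hs']; omega
  · obtain ⟨pp, jj, sp, s', hpeq, hsp, hs', h0, hi0, hgt⟩ := h
    rw [gp_subAt_det hs hs']; omega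

private lemma gp_child_dom {F Q : Type} {r : Run F Q} {i : ℕ} (hi0 : 0 < i)
    {p : List ℕ} {f : Rule F Q} {ts : List (Run F Q)}
    (hs : SubAt r p (RTerm.node f ts)) (hu : i < (RTerm.node f ts).height)
    {k : ℕ} {c : Run F Q} (hget : ts[k]? = some c) :
    (p ++ [k]) ∈ Dom r i ∨ i < c.height := by
  have hsc : SubAt r (p ++ [k]) c := gp_subAt_append hs (SubAt.step hget (SubAt.refl c))
  rcases Nat.lt_or_ge i c.height with h | h
  · exact Or.inr h
  · left
    by_cases hc : c.height = i
    · exact Or.inl (Or.inl ⟨c, hsc, by omega, hc⟩)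
    · by_cases h0 : c.height = 0
      · exact Or.inr ⟨p, k, RTerm.node f ts, c, rfl, hs, hsc, h0, hi0, hu⟩
      · exact Or.inl (Or.inr ⟨p, k, RTerm.node f ts, c, rfl, hs, hsc, by omega, by omega, hu⟩)

private lemma gp_prefix_height {F Q : Type} {r : Run F Q} {q pp : List ℕ}
    {s sp : Run F Q} (hq : q <+: pp) (hs : SubAt r q s) (hsp : SubAt r pp sp) :
    sp.height ≤ s.height := by
  obtain ⟨rest, rfl⟩ := hq
  obtain ⟨u, hu, hrest⟩ := gp_subAt_split hsp
  rw [gp_subAt_det hs hu]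
  exact gp_height_subAt_le hrest

private lemma gp_strict_prefix_dom {F Q : Type} {r : Run F Q} {i : ℕ}
    {pb q : List ℕ} {s : Run F Q} (hpb : pb ∈ Dom r i) (hq : q <+: pb)
    (hne : q ≠ pb) (hs : SubAt r q s) : i < s.height := by
  rcases hpb with (h | h) | h
  · obtain ⟨sb, hsb, hpos, hhb⟩ := h
    obtain ⟨rest, rfl⟩ := hq
    obtain ⟨u, hu, hrest⟩ := gp_subAt_split hsb
    rw [gp_subAt_det hs hu]
    cases rest with
    | nil => simp at hne
    | cons a rest => have := gp_height_subAt_lt hrest; omega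
  · obtain ⟨pp, jj, sp, s', hpeq, hsp, hs', h0, hlt, hgt⟩ := h
    subst hpeq
    have hqpp : q <+: pp := by
      have h1 := hq.length_le
      have h2 : q.length ≠ (pp ++ [jj]).length := fun hc => hne (hq.eq_of_length hc)
      simp only [List.length_append, List.length_cons, List.length_nil] at h1 h2
      exact List.prefix_of_prefix_length_le hq (by simp) (by omega)
    exact lt_of_lt_of_le hgt (gp_prefix_height hqpp hs hsp)
  · obtain ⟨pp, jj, sp, s', hpeq, hsp, hs', h0, hi0, hgt⟩ := h
    subst hpeq
    have hqpp : q <+: pp := by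
      have h1 := hq.length_le
      have h2 : q.length ≠ (pp ++ [jj]).length := fun hc => hne (hq.eq_of_length hc)
      simp only [List.length_append, List.length_cons, List.length_nil] at h1 h2
      exact List.prefix_of_prefix_length_le hq (by simp) (by omega)
    exact lt_of_lt_of_le hgt (gp_prefix_height hqpp hs hsp)

private lemma gp_mr_descend {β : Type} {D : Set (List ℕ)}
    {ρ : List ℕ → RTerm β → Prop} :
    ∀ (q p : List ℕ) (u u' : RTerm β), MultiRepl D ρ p u u' →
    (∀ q', q' <+: q → q' ≠ q → (p ++ q') ∉ D) →
    ∀ s, SubAt u q s → ∃ s', SubAt u' q s' ∧ MultiRepl D ρ (p ++ q) s s' := by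
  intro q
  induction q with
  | nil =>
    intro p u u' hmr _ s hs
    rw [gp_subAt_nil hs]
    exact ⟨u', SubAt.refl u', by simpa using hmr⟩
  | cons k q ih =>
    intro p u u' hmr hpref s hs
    cases hs with
    | step hget hsub =>
      rename_i f ts c
      cases hmr with
      | here hD _ =>
        exact absurd hD (by simpa using hpref [] List.nil_prefix (by simp))
      | node hnD hlen hpt =>
        rename_i ts'
        obtain ⟨c', hgetc'⟩ := gp_get?_lt (l := ts')
          (by rw [← hlen]; exact gp_lt_of_get? hget)
        have hmrc := hpt k c c' hget hgetc'
        have hcnd : ∀ q', q' <+: q → q' ≠ q → ((p ++ [k]) ++ q') ∉ D := by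
          intro q' hq' hne' hin
          have heq : (p ++ [k]) ++ q' = p ++ (k :: q') := by simp
          rw [heq] at hin
          have hpre : (k :: q') <+: (k :: q) := (List.cons_prefix_cons).2 ⟨rfl, hq'⟩
          have hne'' : (k :: q') ≠ (k :: q) := by simpa using hne'
          exact hpref (k :: q') hpre hne'' hin
        obtain ⟨s', hsub', hmr'⟩ := ih (p ++ [k]) c c' hmrc hcnd s hsub
        refine ⟨s', SubAt.step hgetc' hsub', ?_⟩
        have heq : (p ++ [k]) ++ q = p ++ (k :: q) := by simp
        rwa [heq] at hmr'

private lemma gp_mr_height {F Q : Type} {r : Run F Q} {i j : ℕ}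
    {I : List ℕ → List ℕ} (hi0 : 0 < i)
    (hmapsH : Set.MapsTo I (Hset r i) (Hset r j)) :
    ∀ (p : List ℕ) (u u' : Run F Q),
    MultiRepl (Dom r i) (fun p s => SubAt r (I p) s) p u u' →
    SubAt r p u → i < u.height → j < u'.height := by
  intro p u u' hmr
  induction hmr with
  | here hD hρ =>
    intro hs hu
    have := gp_dom_height hD hs
    omega
  | @node p f ts ts' hnD hlen hpt ih =>
    intro hs hu
    have hpos : (RTerm.node f ts).height = ((RTerm.node f ts).height - 1) + 1 := by omega
    obtain ⟨k, c, hget, hc⟩ := gp_exists_max_child hpos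
    have hsc : SubAt r (p ++ [k]) c := gp_subAt_append hs (SubAt.step hget (SubAt.refl c))
    obtain ⟨c', hget'⟩ := gp_get?_lt (l := ts') (by rw [← hlen]; exact gp_lt_of_get? hget)
    have hchild := hpt k c c' hget hget'
    rcases Nat.lt_or_ge i c.height with hci | hci
    · exact lt_trans (ih k c c' hget hget' hsc hci) (gp_height_child_lt hget')
    · have hchset : (p ++ [k]) ∈ Hset r i := ⟨c, hsc, by omega, by omega⟩
      cases hchild with
      | here _ hρ =>
        obtain ⟨s₀, hs₀, _, hh₀⟩ := hmapsH hchset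
        have hce : c'.height = j := by
          rw [gp_subAt_det hρ hs₀]; exact hh₀
        have := gp_height_child_lt (f := f) hget'
        omega
      | node hnD2 _ _ => exact absurd (Or.inl (Or.inl hchset)) hnD2

private lemma gp_mr_abs_fwd {F Q : Type} {E : List (Pat F × Pat F)} {r : Run F Q}
    {i : ℕ} {I : List ℕ → List ℕ} (hi0 : 0 < i) :
    ∀ (p : List ℕ) (u u' : Run F Q),
    MultiRepl (Dom r i) (fun p s => SubAt r (I p) s) p u u' →
    SubAt r p u → (p ∈ Dom r i ∨ i < u.height) →
    GAbs E (fun a b => ∃ p ∈ Dom r i, ∃ s s', SubAt r p s ∧ SubAt r (I p) s' ∧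
      a = Run.term s ∧ b = Run.term s') i (Run.term u) (Run.term u') := by
  intro p u u' hmr
  induction hmr with
  | here hD hρ =>
    intro hs _
    exact GAbs.base ⟨_, hD, _, _, hs, hρ, rfl, rfl⟩ Relation.ReflTransGen.refl
  | @node p f ts ts' hnD hlen hpt ih =>
    intro hs hcond
    have hu : i < (RTerm.node f ts).height := hcond.resolve_left hnD
    rw [gp_term_node, gp_term_node]
    refine GAbs.node ?_ (by simp [hlen]) ?_
    · rw [← gp_term_node, gp_term_height]
      exact hu
    · intro k a b hga hgb
      obtain ⟨c, hc, rfl⟩ := gp_get?_map_ex hga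
      obtain ⟨c', hc', rfl⟩ := gp_get?_map_ex hgb
      have hsc : SubAt r (p ++ [k]) c := gp_subAt_append hs (SubAt.step hc (SubAt.refl c))
      exact ih k c c' hc hc' hsc (gp_child_dom hi0 hs hu hc)

private lemma gp_mr_abs_bwd {F Q : Type} {E : List (Pat F × Pat F)} {r : Run F Q}
    {i j : ℕ} {I : List ℕ → List ℕ} (hi0 : 0 < i)
    (hmapsH : Set.MapsTo I (Hset r i) (Hset r j)) :
    ∀ (p : List ℕ) (u u' : Run F Q),
    MultiRepl (Dom r i) (fun p s => SubAt r (I p) s) p u u' →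
    SubAt r p u → (p ∈ Dom r i ∨ i < u.height) →
    GAbs E (fun a b => ∃ p ∈ Dom r i, ∃ s s', SubAt r p s ∧ SubAt r (I p) s' ∧
      a = Run.term s' ∧ b = Run.term s) j (Run.term u') (Run.term u) := by
  intro p u u' hmr
  induction hmr with
  | here hD hρ =>
    intro hs _
    exact GAbs.base ⟨_, hD, _, _, hs, hρ, rfl, rfl⟩ Relation.ReflTransGen.refl
  | @node p f ts ts' hnD hlen hpt ih =>
    intro hs hcond
    have hu : i < (RTerm.node f ts).height := hcond.resolve_left hnD
    have hmrnode : MultiRepl (Dom r i) (fun p s => SubAt r (I p) s) p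
        (RTerm.node f ts) (RTerm.node f ts') := MultiRepl.node hnD hlen hpt
    rw [gp_term_node, gp_term_node]
    refine GAbs.node ?_ (by simp [hlen]) ?_
    · rw [← gp_term_node, gp_term_height]
      exact gp_mr_height hi0 hmapsH p _ _ hmrnode hs hu
    · intro k a b hga hgb
      obtain ⟨c', hc', rfl⟩ := gp_get?_map_ex hga
      obtain ⟨c, hc, rfl⟩ := gp_get?_map_ex hgb
      have hsc : SubAt r (p ++ [k]) c := gp_subAt_append hs (SubAt.step hc (SubAt.refl c))
      exact ih k c c' hc hc' hsc (gp_child_dom hi0 hs hu hc)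

end GPAux

-- GPAUX-END

/-- A global pumping preserves equalities and disequalities
modulo `E` between the subterms at positions which are prefixes of positions of
`H_i ∪ Ȟ_i ∪ H̊_i`. -/
theorem global_pumping_preserves_equalities {F Q : Type} (A : TABG F Q)
    (hwf : A.WF) (hconj : A.gc.IsConjAtoms) (hatoms : A.gc.AtomsAre GAtom.IsEqNeq)
    (r : Run F Q) (hrun : IsRun A.rules A.eqs r)
    (hsat : satGC A.eqs Rule.res Rule.sym r A.gc)
    (i j : ℕ) (hj : 1 ≤ j) (hij : j < i) (hi : i ≤ RTerm.height r)
    (I : List ℕ → List ℕ) (r' : Run F Q)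
    (hpump : IsGlobalPumpingWith A.eqs r i j I r')
    (p1 p2 : List ℕ)
    (h1 : ∃ pb ∈ Dom r i, p1 <+: pb) (h2 : ∃ pb ∈ Dom r i, p2 <+: pb) :
    (RTerm.IsPos r' p1 ∧ RTerm.IsPos r' p2) ∧
    (∀ s1 s2 s1' s2', RTerm.SubAt r p1 s1 → RTerm.SubAt r p2 s2 →
      RTerm.SubAt r' p1 s1' → RTerm.SubAt r' p2 s2' →
      (EqE A.eqs (Run.term s1) (Run.term s2) ↔
        EqE A.eqs (Run.term s1') (Run.term s2'))) := by
  obtain ⟨hPI, hMR⟩ := hpump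
  have hE : gpFlat A.eqs := gp_flat_of_wf hwf.1
  have hi0 : 0 < i := by omega
  have hstrict : ∀ pb ∈ Dom r i, ∀ q, q <+: pb → q ≠ pb →
      ∀ s : Run F Q, RTerm.SubAt r q s → i < s.height :=
    fun pb hpb q hq hne s hs => gp_strict_prefix_dom hpb hq hne hs
  have hnotD : ∀ pb ∈ Dom r i, ∀ q, q <+: pb → q ≠ pb → q ∉ Dom r i := by
    intro pb hpb q hq hne hqD
    obtain ⟨s, hs⟩ := gp_dom_subAt hqD
    have h1 := gp_dom_height hqD hs
    have h2 := hstrict pb hpb q hq hne s hs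
    omega
  have main : ∀ p : List ℕ, (∃ pb ∈ Dom r i, p <+: pb) →
      ∃ s s', RTerm.SubAt r p s ∧ RTerm.SubAt r' p s' ∧
        MultiRepl (Dom r i) (fun q u => RTerm.SubAt r (I q) u) p s s' ∧
        (p ∈ Dom r i ∨ i < RTerm.height s) := by
    rintro p ⟨pb, hpb, hpre⟩
    obtain ⟨s, hs⟩ : ∃ s, RTerm.SubAt r p s := by
      obtain ⟨rest, rfl⟩ := hpre
      obtain ⟨sb, hsb⟩ := gp_dom_subAt hpb
      obtain ⟨u, hu, -⟩ := gp_subAt_split hsb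
      exact ⟨u, hu⟩
    have hcnd : ∀ q', q' <+: p → q' ≠ p → (([] : List ℕ) ++ q') ∉ Dom r i := by
      intro q' hq' hne'
      have hlt : q'.length < p.length := by
        have hle := hq'.length_le
        rcases Nat.eq_or_lt_of_le hle with h2 | h2
        · exact absurd (hq'.eq_of_length h2) hne'
        · exact h2
      have hqpb : q' <+: pb := hq'.trans hpre
      have hnepb : q' ≠ pb := by
        intro hqe
        subst hqe
        have := hpre.length_le
        omega
      simpa using hnotD pb hpb q' hqpb hnepb
    obtain ⟨s', hs', hmr⟩ := gp_mr_descend p [] r r' hMR hcnd s hs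
    rw [List.nil_append] at hmr
    refine ⟨s, s', hs, hs', hmr, ?_⟩
    by_cases hpe : p = pb
    · subst hpe
      exact Or.inl hpb
    · exact Or.inr (hstrict pb hpb p hpre hpe s hs)
  obtain ⟨t1, t1', hs1, hs1', hmr1, hcond1⟩ := main p1 h1
  obtain ⟨t2, t2', hs2, hs2', hmr2, hcond2⟩ := main p2 h2
  refine ⟨⟨⟨t1', hs1'⟩, ⟨t2', hs2'⟩⟩, ?_⟩
  intro s1 s2 s1' s2' h1s h2s h1s' h2s'
  obtain rfl : s1 = t1 := gp_subAt_det h1s hs1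
  obtain rfl : s2 = t2 := gp_subAt_det h2s hs2
  obtain rfl : s1' = t1' := gp_subAt_det h1s' hs1'
  obtain rfl : s2' = t2' := gp_subAt_det h2s' hs2'
  -- the forward abstraction pairs
  have hPf0 : ∀ a b : RTerm F, (∃ p ∈ Dom r i, ∃ s s', RTerm.SubAt r p s ∧
      RTerm.SubAt r (I p) s' ∧ a = Run.term s ∧ b = Run.term s') →
      a.height ≤ i := by
    rintro a b ⟨p, hpD, s, s', hsp, hsp', rfl, rfl⟩
    rw [gp_term_height]
    exact gp_dom_height hpD hsp
  have hPf1 : ∀ a b : RTerm F, (∃ p ∈ Dom r i, ∃ s s', RTerm.SubAt r p s ∧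
      RTerm.SubAt r (I p) s' ∧ a = Run.term s ∧ b = Run.term s') →
      a.height = 0 → b = a := by
    rintro a b ⟨p, hpD, s, s', hsp, hsp', rfl, rfl⟩ h0
    rw [gp_term_height] at h0
    rcases hpD with (h | h) | h
    · obtain ⟨s₀, hs₀, hpos, -⟩ := h
      rw [gp_subAt_det hsp hs₀] at h0
      omega
    · obtain ⟨pp, jj, sp, s₀, hpeq, hspp, hs₀, hpos, -, -⟩ := h
      rw [gp_subAt_det hsp hs₀] at h0
      omega
    · have hIp : I p = p := hPI.idRing p h
      rw [hIp] at hsp'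
      rw [gp_subAt_det hsp' hsp]
  have hPf2 : ∀ a b a' b' : RTerm F, (∃ p ∈ Dom r i, ∃ s s', RTerm.SubAt r p s ∧
      RTerm.SubAt r (I p) s' ∧ a = Run.term s ∧ b = Run.term s') →
      (∃ p ∈ Dom r i, ∃ s s', RTerm.SubAt r p s ∧
      RTerm.SubAt r (I p) s' ∧ a' = Run.term s ∧ b' = Run.term s') →
      (EqE A.eqs a a' ↔ EqE A.eqs b b') := by
    rintro a b a' b' ⟨p, hpD, s, s', hsp, hsp', rfl, rfl⟩
      ⟨q, hqD, u, u', hsq, hsq', rfl, rfl⟩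
    exact hPI.eqPres p q hpD hqD s u s' u' hsp hsq hsp' hsq'
  -- the backward abstraction pairs
  have hPb0 : ∀ a b : RTerm F, (∃ p ∈ Dom r i, ∃ s s', RTerm.SubAt r p s ∧
      RTerm.SubAt r (I p) s' ∧ a = Run.term s' ∧ b = Run.term s) →
      a.height ≤ j := by
    rintro a b ⟨p, hpD, s, s', hsp, hsp', rfl, rfl⟩
    rw [gp_term_height]
    rcases hpD with (h | h) | h
    · obtain ⟨s₀, hs₀, -, hh⟩ := hPI.mapsH h
      rw [gp_subAt_det hsp' hs₀]
      omega
    · obtain ⟨pp, jj, sp, s₀, hpeq, hspp, hs₀, hpos, hlt, -⟩ := hPI.mapsHc h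
      rw [gp_subAt_det hsp' hs₀]
      omega
    · have hIp : I p = p := hPI.idRing p h
      rw [hIp] at hsp'
      obtain ⟨pp, jj, sp, s₀, hpeq, hspp, hs₀, hz, -, -⟩ := h
      rw [gp_subAt_det hsp' hs₀]
      omega
  have hPb1 : ∀ a b : RTerm F, (∃ p ∈ Dom r i, ∃ s s', RTerm.SubAt r p s ∧
      RTerm.SubAt r (I p) s' ∧ a = Run.term s' ∧ b = Run.term s) →
      a.height = 0 → b = a := by
    rintro a b ⟨p, hpD, s, s', hsp, hsp', rfl, rfl⟩ h0
    rw [gp_term_height] at h0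
    rcases hpD with (h | h) | h
    · obtain ⟨s₀, hs₀, hpos, hh⟩ := hPI.mapsH h
      rw [gp_subAt_det hsp' hs₀] at h0
      omega
    · obtain ⟨pp, jj, sp, s₀, hpeq, hspp, hs₀, hpos, hlt, -⟩ := hPI.mapsHc h
      rw [gp_subAt_det hsp' hs₀] at h0
      omega
    · have hIp : I p = p := hPI.idRing p h
      rw [hIp] at hsp'
      rw [gp_subAt_det hsp' hsp]
  have hPb2 : ∀ a b a' b' : RTerm F, (∃ p ∈ Dom r i, ∃ s s', RTerm.SubAt r p s ∧
      RTerm.SubAt r (I p) s' ∧ a = Run.term s' ∧ b = Run.term s) →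
      (∃ p ∈ Dom r i, ∃ s s', RTerm.SubAt r p s ∧
      RTerm.SubAt r (I p) s' ∧ a' = Run.term s' ∧ b' = Run.term s) →
      (EqE A.eqs a a' ↔ EqE A.eqs b b') := by
    rintro a b a' b' ⟨p, hpD, s, s', hsp, hsp', rfl, rfl⟩
      ⟨q, hqD, u, u', hsq, hsq', rfl, rfl⟩
    exact (hPI.eqPres p q hpD hqD s u s' u' hsp hsq hsp' hsq').symm
  have habs1 := gp_mr_abs_fwd (E := A.eqs) (I := I) hi0 p1 s1 s1' hmr1 hs1 hcond1
  have habs2 := gp_mr_abs_fwd (E := A.eqs) (I := I) hi0 p2 s2 s2' hmr2 hs2 hcond2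
  have habs1b := gp_mr_abs_bwd (E := A.eqs) (j := j) hi0 hPI.mapsH p1 s1 s1' hmr1 hs1 hcond1
  have habs2b := gp_mr_abs_bwd (E := A.eqs) (j := j) hi0 hPI.mapsH p2 s2 s2' hmr2 hs2 hcond2
  constructor
  · intro h
    exact gp_abs_main hE hPf0 hPf1 hPf2 h _ _ habs1 habs2
  · intro h
    exact gp_abs_main hE hPb0 hPb1 hPb2 h _ _ habs1b habs2b

end TreeAut
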